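/- arXiv:1308.2411 — 5 statements merged into one kernel-verified Lean document; each statement's English description precedes it below -/
import Mathlib

section
/- Let (S¹, ξ¹) and (S², ξ²) be two weak solutions of the limit chemostat system with ξ¹_0 = ξ²_0, and set C_t = sup_{0 ≤ u ≤ t} (⟨ξ¹_u, 1⟩ + ⟨ξ²_u, 1⟩). Then for every t ≥ 0 and every continuously differentiable f : X → ℝ with ‖f‖_∞ ≤ 1 and ‖f'‖_∞ ≤ 1, |⟨ξ¹_t − ξ²_t, f⟩| ≤ (ḡ + 3λ̄ + D) ∫_0^t ‖ξ¹_u − ξ²_u‖_TV du + C_t (k_g + 3 k_λ) ∫_0^t |S¹_u − S²_u| du. -/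
open MeasureTheory Filter

noncomputable section

/-- The integrand of the substrate equation:
`ρ_s(S_u, ξ_u) = D (s_in − S_u) − (k/V) ∫_X ρ_g(S_u, x) ξ_u(dx)` with `X = [0, mmax]`. -/
def subIntegrand (mmax D sIn k V : ℝ) (rg : ℝ → ℝ → ℝ)
    (S : ℝ → ℝ) (ξ : ℝ → Measure ℝ) (u : ℝ) : ℝ :=
  D * (sIn - S u) - (k / V) * ∫ x in Set.Icc (0:ℝ) mmax, rg (S u) x ∂(ξ u)

/-- The integrand of the weak population equation, for a test function `f`:
`∫_X ρ_g(S_u,x) f'(x) ξ_u(dx)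
 + ∫_X ∫_0^1 λ(S_u,x) (f(αx) + f((1−α)x) − f(x)) Q(dα) ξ_u(dx) − D ⟨ξ_u, f⟩`. -/
def popIntegrand (mmax D : ℝ) (rg lam : ℝ → ℝ → ℝ) (Q : Measure ℝ) (f : ℝ → ℝ)
    (S : ℝ → ℝ) (ξ : ℝ → Measure ℝ) (u : ℝ) : ℝ :=
  (∫ x in Set.Icc (0:ℝ) mmax, rg (S u) x * deriv f x ∂(ξ u))
  + (∫ x in Set.Icc (0:ℝ) mmax,
      ∫ α in Set.Icc (0:ℝ) 1, lam (S u) x * (f (α * x) + f ((1 - α) * x) - f x) ∂Q ∂(ξ u))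
  - D * ∫ x in Set.Icc (0:ℝ) mmax, f x ∂(ξ u)

/-- Weak solution `(S, ξ)` of the limit chemostat system:
`S : [0,∞) → [0,∞)` is continuous, `ξ` takes values in the finite measures on
`X = [0, mmax]`, `u ↦ ⟨ξ_u, g⟩` is Borel measurable and locally bounded for every
continuous `g`, and the substrate and population equations (i) and (ii) hold
(with genuinely integrable time integrands). -/
structure IsWeakSolution (mmax D sIn k V : ℝ) (rg lam : ℝ → ℝ → ℝ) (Q : Measure ℝ)
    (S : ℝ → ℝ) (ξ : ℝ → Measure ℝ) : Prop where
  S_cont : Continuous S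
  S_nonneg : ∀ t, 0 ≤ t → 0 ≤ S t
  xi_fin : ∀ t, IsFiniteMeasure (ξ t)
  xi_supp : ∀ t, (ξ t) (Set.Icc (0:ℝ) mmax)ᶜ = 0
  xi_meas : ∀ g : ℝ → ℝ, Continuous g →
      Measurable fun u => ∫ x in Set.Icc (0:ℝ) mmax, g x ∂(ξ u)
  xi_locbdd : ∀ g : ℝ → ℝ, Continuous g → ∀ T : ℝ, ∃ C : ℝ,
      ∀ u ∈ Set.Icc (0:ℝ) T, |∫ x in Set.Icc (0:ℝ) mmax, g x ∂(ξ u)| ≤ C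
  S_int : ∀ t, 0 ≤ t →
      IntervalIntegrable (subIntegrand mmax D sIn k V rg S ξ) volume 0 t
  S_eq : ∀ t, 0 ≤ t →
      S t = S 0 + ∫ u in (0:ℝ)..t, subIntegrand mmax D sIn k V rg S ξ u
  xi_int : ∀ f : ℝ → ℝ, ContDiff ℝ 1 f → ∀ t, 0 ≤ t →
      IntervalIntegrable (popIntegrand mmax D rg lam Q f S ξ) volume 0 t
  xi_eq : ∀ f : ℝ → ℝ, ContDiff ℝ 1 f → ∀ t, 0 ≤ t →
      (∫ x in Set.Icc (0:ℝ) mmax, f x ∂(ξ t))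
        = (∫ x in Set.Icc (0:ℝ) mmax, f x ∂(ξ 0))
          + ∫ u in (0:ℝ)..t, popIntegrand mmax D rg lam Q f S ξ u

/-- The standing hypotheses on the data of the chemostat model. -/
structure ChemostatHyps (mmax D sIn k V gbar lamBar kg klam : ℝ)
    (rg lam : ℝ → ℝ → ℝ) (Q : Measure ℝ) : Prop where
  mmax_pos : 0 < mmax
  D_pos : 0 < D
  sIn_pos : 0 < sIn
  k_pos : 0 < k
  V_pos : 0 < V
  gbar_pos : 0 < gbar
  lamBar_pos : 0 < lamBar
  kg_nonneg : 0 ≤ kg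
  klam_nonneg : 0 ≤ klam
  rg_meas : ∀ s : ℝ, Measurable (rg s)
  rg_nonneg : ∀ s, 0 ≤ s → ∀ x ∈ Set.Icc (0:ℝ) mmax, 0 ≤ rg s x
  rg_le : ∀ s, 0 ≤ s → ∀ x ∈ Set.Icc (0:ℝ) mmax, rg s x ≤ gbar
  rg_lip : ∀ s₁ s₂, 0 ≤ s₁ → 0 ≤ s₂ → ∀ x ∈ Set.Icc (0:ℝ) mmax,
      |rg s₁ x - rg s₂ x| ≤ kg * |s₁ - s₂|
  rg_zero : ∀ x ∈ Set.Icc (0:ℝ) mmax, rg 0 x = 0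
  rg_mmax : ∀ s, 0 ≤ s → rg s mmax = 0
  lam_meas : ∀ s : ℝ, Measurable (lam s)
  lam_nonneg : ∀ s, 0 ≤ s → ∀ x ∈ Set.Icc (0:ℝ) mmax, 0 ≤ lam s x
  lam_le : ∀ s, 0 ≤ s → ∀ x ∈ Set.Icc (0:ℝ) mmax, lam s x ≤ lamBar
  lam_lip : ∀ s₁ s₂, 0 ≤ s₁ → 0 ≤ s₂ → ∀ x ∈ Set.Icc (0:ℝ) mmax,
      |lam s₁ x - lam s₂ x| ≤ klam * |s₁ - s₂|
  Q_prob : IsProbabilityMeasure Q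
  Q_supp : Q (Set.Icc (0:ℝ) 1)ᶜ = 0
  Q_symm : Q.map (fun α => 1 - α) = Q

/-- Total variation distance `‖μ − ν‖_TV` between two finite measures, defined through the
total variation of the signed measure `μ − ν`. -/
def tvNorm {Ω : Type*} [MeasurableSpace Ω] (μ ν : Measure Ω)
    (hμ : IsFiniteMeasure μ) (hν : IsFiniteMeasure ν) : ℝ :=
  (((@Measure.toSignedMeasure Ω _ μ hμ) - (@Measure.toSignedMeasure Ω _ ν hν)).totalVariation
      Set.univ).toReal

section Aux

variable {Ω : Type*} [MeasurableSpace Ω] (μ ν : Measure Ω) [hμ : IsFiniteMeasure μ] [hν : IsFiniteMeasure ν]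

lemma sm_apply {E : Set Ω} (hE : MeasurableSet E) :
    (μ.toSignedMeasure - ν.toSignedMeasure) E = (μ E).toReal - (ν E).toReal := by
  rw [VectorMeasure.sub_apply, Measure.toSignedMeasure_apply_measurable hE,
    Measure.toSignedMeasure_apply_measurable hE]
  rfl

lemma sm_apply' {E : Set Ω} (hE : MeasurableSet E) :
    (μ.toSignedMeasure - ν.toSignedMeasure) E
      = ((μ.toSignedMeasure - ν.toSignedMeasure).toJordanDecomposition.posPart E).toReal
        - ((μ.toSignedMeasure - ν.toSignedMeasure).toJordanDecomposition.negPart E).toReal := by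
  set s := μ.toSignedMeasure - ν.toSignedMeasure
  conv_lhs => rw [← s.toSignedMeasure_toJordanDecomposition]
  rw [JordanDecomposition.toSignedMeasure, VectorMeasure.sub_apply,
    Measure.toSignedMeasure_apply_measurable hE, Measure.toSignedMeasure_apply_measurable hE]
  rfl

lemma add_neg_eq_add_pos :
    μ + (μ.toSignedMeasure - ν.toSignedMeasure).toJordanDecomposition.negPart
      = ν + (μ.toSignedMeasure - ν.toSignedMeasure).toJordanDecomposition.posPart := by
  set s := μ.toSignedMeasure - ν.toSignedMeasure
  ext E hE
  have h1 := sm_apply μ ν hE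
  have h2 := sm_apply' μ ν hE
  have hμE : μ E ≠ ⊤ := measure_ne_top _ _
  have hνE : ν E ≠ ⊤ := measure_ne_top _ _
  have hpE : s.toJordanDecomposition.posPart E ≠ ⊤ := measure_ne_top _ _
  have hnE : s.toJordanDecomposition.negPart E ≠ ⊤ := measure_ne_top _ _
  rw [Measure.add_apply, Measure.add_apply]
  rw [← ENNReal.toReal_eq_toReal_iff' (by finiteness) (by finiteness)]
  rw [ENNReal.toReal_add hμE hnE, ENNReal.toReal_add hνE hpE]
  have := h1.symm.trans h2
  linarith

lemma tvNorm_eq :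
    tvNorm μ ν hμ hν
      = ((μ.toSignedMeasure - ν.toSignedMeasure).toJordanDecomposition.posPart Set.univ).toReal
        + ((μ.toSignedMeasure - ν.toSignedMeasure).toJordanDecomposition.negPart Set.univ).toReal := by
  rw [tvNorm, SignedMeasure.totalVariation, Measure.add_apply,
    ENNReal.toReal_add (measure_ne_top _ _) (measure_ne_top _ _)]

lemma abs_integral_sub_le_tv {g : Ω → ℝ} (hg : Measurable g) {M : ℝ} (hb : ∀ x, |g x| ≤ M) :
    |(∫ x, g x ∂μ) - ∫ x, g x ∂ν| ≤ M * tvNorm μ ν hμ hν := by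
  set s := μ.toSignedMeasure - ν.toSignedMeasure
  set p := s.toJordanDecomposition.posPart
  set n := s.toJordanDecomposition.negPart
  have hgint : ∀ (ρ : Measure Ω) (_ : IsFiniteMeasure ρ), Integrable g ρ := fun ρ hρ => by
    refine (integrable_const M).mono' hg.aestronglyMeasurable ?_
    exact Filter.Eventually.of_forall fun x => by simpa [Real.norm_eq_abs] using hb x
  have key : (∫ x, g x ∂μ) + ∫ x, g x ∂n = (∫ x, g x ∂ν) + ∫ x, g x ∂p := by
    rw [← integral_add_measure (hgint μ inferInstance) (hgint n inferInstance),
      ← integral_add_measure (hgint ν inferInstance) (hgint p inferInstance),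
      add_neg_eq_add_pos μ ν]
  have hbp : |∫ x, g x ∂p| ≤ M * (p Set.univ).toReal := by
    simpa [Real.norm_eq_abs, measureReal_def] using
      norm_integral_le_of_norm_le_const (μ := p) (f := g) (C := M)
        (Filter.Eventually.of_forall fun x => by simpa [Real.norm_eq_abs] using hb x)
  have hbn : |∫ x, g x ∂n| ≤ M * (n Set.univ).toReal := by
    simpa [Real.norm_eq_abs, measureReal_def] using
      norm_integral_le_of_norm_le_const (μ := n) (f := g) (C := M)
        (Filter.Eventually.of_forall fun x => by simpa [Real.norm_eq_abs] using hb x)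
  have : (∫ x, g x ∂μ) - ∫ x, g x ∂ν = (∫ x, g x ∂p) - ∫ x, g x ∂n := by linarith
  rw [this, tvNorm_eq μ ν]
  calc |(∫ x, g x ∂p) - ∫ x, g x ∂n| ≤ |∫ x, g x ∂p| + |∫ x, g x ∂n| := abs_sub _ _
  _ ≤ M * (p Set.univ).toReal + M * (n Set.univ).toReal := add_le_add hbp hbn
  _ = M * ((p Set.univ).toReal + (n Set.univ).toReal) := by ring

lemma tv_le_masses : tvNorm μ ν hμ hν ≤ (μ Set.univ).toReal + (ν Set.univ).toReal := by
  set s := μ.toSignedMeasure - ν.toSignedMeasure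
  set p := s.toJordanDecomposition.posPart
  set n := s.toJordanDecomposition.negPart
  obtain ⟨t, ht, hpt, hntc⟩ := s.toJordanDecomposition.mutuallySingular
  have hcompl : ∀ (ρ : Measure Ω), ρ t + ρ tᶜ = ρ Set.univ := fun ρ =>
    measure_add_measure_compl ht
  have hp : (p Set.univ).toReal = (p tᶜ).toReal := by rw [← hcompl p, hpt, zero_add]
  have hn : (n Set.univ).toReal = (n t).toReal := by rw [← hcompl n, hntc, add_zero]
  have h1 : s tᶜ = (p tᶜ).toReal - (n tᶜ).toReal := sm_apply' μ ν ht.compl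
  have h2 : s t = (p t).toReal - (n t).toReal := sm_apply' μ ν ht
  have h3 : s tᶜ = (μ tᶜ).toReal - (ν tᶜ).toReal := sm_apply μ ν ht.compl
  have h4 : s t = (μ t).toReal - (ν t).toReal := sm_apply μ ν ht
  have hμt : (μ tᶜ).toReal ≤ (μ Set.univ).toReal :=
    ENNReal.toReal_mono (measure_ne_top _ _) (measure_mono (Set.subset_univ _))
  have hνt : (ν t).toReal ≤ (ν Set.univ).toReal :=
    ENNReal.toReal_mono (measure_ne_top _ _) (measure_mono (Set.subset_univ _))
  have hpt0 : (p t).toReal = 0 := by rw [hpt]; simp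
  have hnt0 : (n tᶜ).toReal = 0 := by rw [hntc]; simp
  have hν0 : 0 ≤ (ν tᶜ).toReal := ENNReal.toReal_nonneg
  have hμ0 : 0 ≤ (μ t).toReal := ENNReal.toReal_nonneg
  rw [tvNorm_eq μ ν, hp, hn]
  linarith

def ratSet (F : Finset (ℚ × ℚ)) : Set ℝ := ⋃ q ∈ F, Set.Ioo (q.1 : ℝ) (q.2 : ℝ)

lemma ratSet_measurable (F : Finset (ℚ × ℚ)) : MeasurableSet (ratSet F) :=
  F.measurableSet_biUnion fun _ _ => measurableSet_Ioo

lemma ratSet_empty : ratSet ∅ = ∅ := by simp [ratSet]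

lemma ratSet_union (F G : Finset (ℚ × ℚ)) : ratSet (F ∪ G) = ratSet F ∪ ratSet G := by
  ext x
  simp only [ratSet, Set.mem_iUnion, Set.mem_union, Finset.mem_union]
  constructor
  · rintro ⟨q, hq | hq, hx⟩
    · exact Or.inl ⟨q, hq, hx⟩
    · exact Or.inr ⟨q, hq, hx⟩
  · rintro (⟨q, hq, hx⟩ | ⟨q, hq, hx⟩)
    exacts [⟨q, Or.inl hq, hx⟩, ⟨q, Or.inr hq, hx⟩]

lemma posPart_univ_eq_iSup (μ ν : Measure ℝ) [IsFiniteMeasure μ] [IsFiniteMeasure ν] :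
    (((μ.toSignedMeasure - ν.toSignedMeasure).toJordanDecomposition.posPart Set.univ).toReal)
      = ⨆ F : Finset (ℚ × ℚ), ((μ (ratSet F)).toReal - (ν (ratSet F)).toReal) := by
  set s := μ.toSignedMeasure - ν.toSignedMeasure with hs
  set p := s.toJordanDecomposition.posPart with hpdef
  set n := s.toJordanDecomposition.negPart with hndef
  have hbd : ∀ F : Finset (ℚ × ℚ),
      (μ (ratSet F)).toReal - (ν (ratSet F)).toReal ≤ (p Set.univ).toReal := by
    intro F
    have h1 := sm_apply μ ν (ratSet_measurable F)
    have h2 := sm_apply' μ ν (ratSet_measurable F)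
    have h3 : (p (ratSet F)).toReal ≤ (p Set.univ).toReal :=
      ENNReal.toReal_mono (measure_ne_top _ _) (measure_mono (Set.subset_univ _))
    have h4 : (0:ℝ) ≤ (n (ratSet F)).toReal := ENNReal.toReal_nonneg
    rw [← hs] at h1 h2
    linarith [h1.symm.trans h2]
  have hbdd : BddAbove (Set.range fun F : Finset (ℚ × ℚ) =>
      (μ (ratSet F)).toReal - (ν (ratSet F)).toReal) :=
    ⟨(p Set.univ).toReal, by rintro _ ⟨F, rfl⟩; exact hbd F⟩
  refine le_antisymm ?_ (ciSup_le hbd)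
  obtain ⟨t, ht, hpt, hntc⟩ := s.toJordanDecomposition.mutuallySingular
  have hAm : MeasurableSet tᶜ := ht.compl
  have hsA : s tᶜ = (p Set.univ).toReal := by
    have h2 := sm_apply' μ ν hAm
    rw [← hs] at h2
    have hpA : p tᶜ = p Set.univ := by
      rw [← measure_add_measure_compl ht]
      rw [show p t = 0 from hpt, zero_add]
    rw [h2, hpA, show n tᶜ = 0 from hntc]
    simp
  refine le_of_forall_pos_le_add fun ε hε => ?_
  have hε2 : (0:ℝ) < ε / 2 := by linarith
  have hε2' : ENNReal.ofReal (ε / 2) ≠ 0 := (ENNReal.ofReal_pos.mpr hε2).ne'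
  obtain ⟨U, hAU, hUo, hνU⟩ :=
    Set.exists_isOpen_lt_add (μ := ν) tᶜ (measure_ne_top _ _) hε2'
  set ι := {F : Finset (ℚ × ℚ) // ratSet F ⊆ U}
  haveI : Nonempty ι := ⟨⟨∅, by rw [ratSet_empty]; exact Set.empty_subset _⟩⟩
  have hdir : Directed (· ⊆ ·) fun i : ι => ratSet i.1 := by
    intro i j
    refine ⟨⟨i.1 ∪ j.1, ?_⟩, ?_, ?_⟩
    · rw [ratSet_union]; exact Set.union_subset i.2 j.2
    · show ratSet i.1 ⊆ ratSet (i.1 ∪ j.1)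
      rw [ratSet_union]; exact Set.subset_union_left
    · show ratSet j.1 ⊆ ratSet (i.1 ∪ j.1)
      rw [ratSet_union]; exact Set.subset_union_right
  have hcov : (⋃ i : ι, ratSet i.1) = U := by
    refine Set.Subset.antisymm (Set.iUnion_subset fun i => i.2) fun x hx => ?_
    obtain ⟨δ, hδ, hball⟩ := Metric.isOpen_iff.mp hUo x hx
    obtain ⟨q, hq1, hq2⟩ := exists_rat_btwn (show x - δ < x by linarith)
    obtain ⟨r, hr1, hr2⟩ := exists_rat_btwn (show x < x + δ by linarith)
    have hsub : ratSet {(q, r)} ⊆ U := by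
      intro y hy
      simp only [ratSet, Finset.mem_singleton, Set.mem_Ioo, Set.iUnion_iUnion_eq_left] at hy
      apply hball
      rw [Real.ball_eq_Ioo]
      exact ⟨by linarith [hy.1], by linarith [hy.2]⟩
    refine Set.mem_iUnion.mpr ⟨⟨{(q, r)}, hsub⟩, ?_⟩
    simp only [ratSet, Finset.mem_singleton, Set.iUnion_iUnion_eq_left]
    exact ⟨hq2, hr1⟩
  have hμU : μ U = ⨆ i : ι, μ (ratSet i.1) := by
    conv_lhs => rw [← hcov]
    exact Directed.measure_iUnion hdir
  -- pick i with μ U ≤ μ (ratSet i.1) + ofReal (ε/2)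
  obtain ⟨i, hi⟩ : ∃ i : ι, μ U ≤ μ (ratSet i.1) + ENNReal.ofReal (ε / 2) := by
    by_cases h0 : μ U = 0
    · exact ⟨Classical.arbitrary ι, by rw [h0]; exact zero_le⟩
    · have hlt : μ U - ENNReal.ofReal (ε / 2) < μ U :=
        ENNReal.sub_lt_self (measure_ne_top _ _) h0 hε2'
      rw [hμU] at hlt
      obtain ⟨i, hi⟩ := lt_iSup_iff.mp hlt
      rw [← hμU] at hi
      rcases le_or_gt (ENNReal.ofReal (ε / 2)) (μ U) with hc | hc
      · exact ⟨i, le_of_lt ((ENNReal.sub_lt_iff_lt_right ENNReal.ofReal_ne_top hc).mp hi)⟩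
      · exact ⟨Classical.arbitrary ι, le_trans hc.le le_add_self⟩
  -- real comparisons
  have e1 : (μ U).toReal ≤ (μ (ratSet i.1)).toReal + ε / 2 := by
    have := ENNReal.toReal_mono (by finiteness) hi
    rwa [ENNReal.toReal_add (measure_ne_top _ _) ENNReal.ofReal_ne_top,
      ENNReal.toReal_ofReal hε2.le] at this
  have e2 : (ν (ratSet i.1)).toReal ≤ (ν U).toReal :=
    ENNReal.toReal_mono (measure_ne_top _ _) (measure_mono i.2)
  have e3 : (ν U).toReal ≤ (ν tᶜ).toReal + ε / 2 := by
    have := ENNReal.toReal_mono (by finiteness) hνU.le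
    rwa [ENNReal.toReal_add (measure_ne_top _ _) ENNReal.ofReal_ne_top,
      ENNReal.toReal_ofReal hε2.le] at this
  have e4 : (μ tᶜ).toReal ≤ (μ U).toReal :=
    ENNReal.toReal_mono (measure_ne_top _ _) (measure_mono hAU)
  have e5 : (μ (ratSet i.1)).toReal - (ν (ratSet i.1)).toReal
      ≤ ⨆ F : Finset (ℚ × ℚ), ((μ (ratSet F)).toReal - (ν (ratSet F)).toReal) :=
    le_ciSup hbdd i.1
  have e6 : s tᶜ = (μ tᶜ).toReal - (ν tᶜ).toReal := by
    have := sm_apply μ ν hAm; rwa [← hs] at this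
  rw [← hsA, e6]
  linarith

lemma tvNorm_formula (μ ν : Measure ℝ) [h1' : IsFiniteMeasure μ] [h2' : IsFiniteMeasure ν] :
    tvNorm μ ν h1' h2'
      = 2 * (⨆ F : Finset (ℚ × ℚ), ((μ (ratSet F)).toReal - (ν (ratSet F)).toReal))
        - ((μ Set.univ).toReal - (ν Set.univ).toReal) := by
  have h1 := tvNorm_eq μ ν
  have h2 := sm_apply μ ν MeasurableSet.univ
  have h3 := sm_apply' μ ν MeasurableSet.univ
  rw [← posPart_univ_eq_iSup μ ν]
  linarith

section Kernel

variable {mmax : ℝ} {ξ : ℝ → Measure ℝ}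

lemma xi_restrict_eq (hsupp : ∀ u, ξ u (Set.Icc (0:ℝ) mmax)ᶜ = 0) (u : ℝ) :
    (ξ u).restrict (Set.Icc (0:ℝ) mmax) = ξ u := by
  apply Measure.restrict_eq_self_of_ae_mem
  rw [ae_iff, ← Set.compl_def]
  exact hsupp u

lemma set_integral_eq_integral (hsupp : ∀ u, ξ u (Set.Icc (0:ℝ) mmax)ᶜ = 0) (u : ℝ)
    (g : ℝ → ℝ) : (∫ x in Set.Icc (0:ℝ) mmax, g x ∂(ξ u)) = ∫ x, g x ∂(ξ u) := by
  rw [← xi_restrict_eq hsupp u]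
  simp [Measure.restrict_restrict, measurableSet_Icc]

lemma measurable_mass
    (hfin : ∀ u, IsFiniteMeasure (ξ u))
    (hsupp : ∀ u, ξ u (Set.Icc (0:ℝ) mmax)ᶜ = 0)
    (hmeas : ∀ g : ℝ → ℝ, Continuous g →
      Measurable fun u => ∫ x in Set.Icc (0:ℝ) mmax, g x ∂(ξ u)) :
    Measurable fun u => ξ u Set.univ := by
  have h1 : ∀ u, (ξ u Set.univ).toReal = ∫ x in Set.Icc (0:ℝ) mmax, (1:ℝ) ∂(ξ u) := by
    intro u
    haveI := hfin u
    rw [set_integral_eq_integral hsupp u, integral_const, smul_eq_mul, mul_one]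
    rfl
  have h2 : Measurable fun u => (ξ u Set.univ).toReal := by
    simp only [h1]; exact hmeas _ continuous_const
  have : (fun u => ξ u Set.univ) = fun u => ENNReal.ofReal ((ξ u Set.univ).toReal) := by
    funext u
    haveI := hfin u
    rw [ENNReal.ofReal_toReal (measure_ne_top _ _)]
  rw [this]
  exact ENNReal.measurable_ofReal.comp h2

lemma measurable_xi_apply
    (hfin : ∀ u, IsFiniteMeasure (ξ u))
    (hsupp : ∀ u, ξ u (Set.Icc (0:ℝ) mmax)ᶜ = 0)
    (hmeas : ∀ g : ℝ → ℝ, Continuous g →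
      Measurable fun u => ∫ x in Set.Icc (0:ℝ) mmax, g x ∂(ξ u))
    {E : Set ℝ} (hE : MeasurableSet E) :
    Measurable fun u => ξ u E := by
  revert E
  have main := MeasurableSpace.induction_on_inter
    (C := fun E _ => Measurable fun u => ξ u E)
    (borel_eq_generateFrom_Iic ℝ) isPiSystem_Iic ?empty ?basic ?compl ?iUnion
  case _ => exact fun E hE => main E hE
  case empty => simp
  case basic =>
    rintro E ⟨a, rfl⟩
    -- approximate indicator of Iic a by continuous functions
    set g : ℕ → ℝ → ℝ := fun n x => max 0 (min 1 (1 - (n + 1 : ℝ) * (x - a))) with hg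
    have hgc : ∀ n, Continuous (g n) := fun n => by
      apply Continuous.max continuous_const
      exact Continuous.min continuous_const (by continuity)
    have hgb : ∀ n x, ‖g n x‖ ≤ 1 := fun n x => by
      rw [Real.norm_eq_abs, abs_le]
      constructor
      · exact le_trans (by norm_num) (le_max_left _ _)
      · apply max_le (by norm_num) (min_le_left _ _)
    have hglim : ∀ x : ℝ, Filter.Tendsto (fun n => g n x) Filter.atTop
        (nhds (Set.indicator (Set.Iic a) (fun _ => (1:ℝ)) x)) := by
      intro x
      rcases le_or_gt x a with hx | hx
      · have : ∀ n, g n x = 1 := fun n => by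
          rw [hg]
          have h1 : (1:ℝ) ≤ 1 - (n + 1 : ℝ) * (x - a) := by nlinarith [sub_nonpos.mpr hx]
          simp only []
          rw [min_eq_left h1, max_eq_right (by norm_num : (0:ℝ) ≤ 1)]
        simp only [this, Set.indicator_of_mem (Set.mem_Iic.mpr hx)]
        exact tendsto_const_nhds
      · rw [Set.indicator_of_notMem (by simpa using hx)]
        have : ∀ᶠ n : ℕ in Filter.atTop, g n x = 0 := by
          obtain ⟨N, hN⟩ := exists_nat_gt (1 / (x - a))
          refine Filter.eventually_atTop.mpr ⟨N, fun n hn => ?_⟩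
          rw [hg]
          have hxa : 0 < x - a := by linarith
          have : (1:ℝ) - (n + 1 : ℝ) * (x - a) ≤ 0 := by
            have h1 : (1:ℝ) / (x - a) ≤ n + 1 := by
              have : (N:ℝ) ≤ n := by exact_mod_cast hn
              linarith
            have := (div_le_iff₀ hxa).mp h1
            linarith
          simp only []
          rw [max_eq_left]
          exact le_trans (min_le_right _ _) this
        exact Filter.Tendsto.congr' (this.mono fun n h => h.symm)
          tendsto_const_nhds
    have hint : ∀ u, Filter.Tendsto (fun n => ∫ x in Set.Icc (0:ℝ) mmax, g n x ∂(ξ u))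
        Filter.atTop (nhds ((ξ u (Set.Iic a)).toReal)) := by
      intro u
      haveI := hfin u
      have h0 : (ξ u (Set.Iic a)).toReal
          = ∫ x, Set.indicator (Set.Iic a) (fun _ => (1:ℝ)) x ∂(ξ u) := by
        rw [integral_indicator measurableSet_Iic, setIntegral_const, smul_eq_mul, mul_one]
        rfl
      rw [h0]
      simp only [set_integral_eq_integral hsupp]
      apply tendsto_integral_of_dominated_convergence (fun _ => (1:ℝ))
      · exact fun n => ((hgc n).measurable).aestronglyMeasurable
      · exact integrable_const 1
      · exact fun n => Filter.Eventually.of_forall fun x => hgb n x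
      · exact Filter.Eventually.of_forall hglim
    have h2 : Measurable fun u => (ξ u (Set.Iic a)).toReal :=
      measurable_of_tendsto_metrizable (fun n => hmeas (g n) (hgc n))
        (tendsto_pi_nhds.mpr hint)
    have : (fun u => ξ u (Set.Iic a))
        = fun u => ENNReal.ofReal ((ξ u (Set.Iic a)).toReal) := by
      funext u
      haveI := hfin u
      rw [ENNReal.ofReal_toReal (measure_ne_top _ _)]
    rw [this]
    exact ENNReal.measurable_ofReal.comp h2
  case compl =>
    intro E hE hind
    have : (fun u => ξ u Eᶜ) = fun u => ξ u Set.univ - ξ u E := by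
      funext u
      haveI := hfin u
      rw [measure_compl hE (measure_ne_top _ _)]
    rw [this]
    exact (measurable_mass hfin hsupp hmeas).sub hind
  case iUnion =>
    intro E hdisj hE hind
    have : (fun u => ξ u (⋃ n, E n)) = fun u => ∑' n, ξ u (E n) := by
      funext u
      exact measure_iUnion hdisj hE
    rw [this]
    exact Measurable.ennreal_tsum hind

end Kernel

section TVMeas

variable {mmax : ℝ} {ξ₁ ξ₂ : ℝ → Measure ℝ}

lemma measurable_tv
    (hfin₁ : ∀ u, IsFiniteMeasure (ξ₁ u)) (hfin₂ : ∀ u, IsFiniteMeasure (ξ₂ u))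
    (hsupp₁ : ∀ u, ξ₁ u (Set.Icc (0:ℝ) mmax)ᶜ = 0)
    (hsupp₂ : ∀ u, ξ₂ u (Set.Icc (0:ℝ) mmax)ᶜ = 0)
    (hmeas₁ : ∀ g : ℝ → ℝ, Continuous g →
      Measurable fun u => ∫ x in Set.Icc (0:ℝ) mmax, g x ∂(ξ₁ u))
    (hmeas₂ : ∀ g : ℝ → ℝ, Continuous g →
      Measurable fun u => ∫ x in Set.Icc (0:ℝ) mmax, g x ∂(ξ₂ u)) :
    Measurable fun u => tvNorm (ξ₁ u) (ξ₂ u) (hfin₁ u) (hfin₂ u) := by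
  set term : Finset (ℚ × ℚ) → ℝ → ℝ :=
    fun F u => (ξ₁ u (ratSet F)).toReal - (ξ₂ u (ratSet F)).toReal with hterm_def
  have hterm : ∀ F, Measurable (term F) := fun F =>
    ((measurable_xi_apply hfin₁ hsupp₁ hmeas₁ (ratSet_measurable F)).ennreal_toReal).sub
      ((measurable_xi_apply hfin₂ hsupp₂ hmeas₂ (ratSet_measurable F)).ennreal_toReal)
  set bnd : ℝ → ℝ := fun u => (ξ₁ u Set.univ).toReal with hbnd_def
  have htb : ∀ F u, term F u ≤ bnd u := by
    intro F u
    haveI := hfin₁ u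
    have h1 : (ξ₁ u (ratSet F)).toReal ≤ (ξ₁ u Set.univ).toReal :=
      ENNReal.toReal_mono (measure_ne_top _ _) (measure_mono (Set.subset_univ _))
    have h2 : (0:ℝ) ≤ (ξ₂ u (ratSet F)).toReal := ENNReal.toReal_nonneg
    simp only [hterm_def, hbnd_def]
    linarith
  obtain ⟨e, he⟩ := exists_surjective_nat (Finset (ℚ × ℚ))
  set H : ℕ → ℝ → ℝ := fun n =>
    Nat.rec (term (e 0)) (fun n Hn => fun u => max (Hn u) (term (e (n+1)) u)) n with hH_def
  have hH0 : H 0 = term (e 0) := rfl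
  have hHsucc : ∀ n, H (n + 1) = fun u => max (H n u) (term (e (n+1)) u) := fun n => rfl
  have hHmeas : ∀ n, Measurable (H n) := by
    intro n
    induction n with
    | zero => exact hterm (e 0)
    | succ n ih => rw [hHsucc]; exact ih.max (hterm (e (n+1)))
  have hHle : ∀ n u, H n u ≤ bnd u := by
    intro n
    induction n with
    | zero => exact fun u => htb (e 0) u
    | succ n ih =>
      intro u
      rw [hHsucc]
      exact max_le (ih u) (htb (e (n+1)) u)
  have hHmono : ∀ u, Monotone fun n => H n u := fun u =>
    monotone_nat_of_le_succ fun n => by rw [hHsucc]; exact le_max_left _ _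
  have htermH : ∀ n u, term (e n) u ≤ H n u := by
    intro n u
    cases n with
    | zero => exact le_refl _
    | succ n => rw [hHsucc]; exact le_max_right _ _
  have bddH : ∀ u, BddAbove (Set.range fun n => H n u) :=
    fun u => ⟨bnd u, by rintro _ ⟨n, rfl⟩; exact hHle n u⟩
  have bddn : ∀ u, BddAbove (Set.range fun n => term (e n) u) :=
    fun u => ⟨bnd u, by rintro _ ⟨n, rfl⟩; exact htb (e n) u⟩
  have bddF : ∀ u, BddAbove (Set.range fun F => term F u) :=
    fun u => ⟨bnd u, by rintro _ ⟨F, rfl⟩; exact htb F u⟩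
  have hsup_eq : ∀ u, (⨆ n, H n u) = ⨆ F, term F u := by
    intro u
    apply le_antisymm
    · apply ciSup_le
      intro n
      induction n with
      | zero => exact le_ciSup (bddF u) (e 0)
      | succ n ih => rw [hHsucc]; exact max_le ih (le_ciSup (bddF u) (e (n+1)))
    · apply ciSup_le
      intro F
      obtain ⟨n, rfl⟩ := he F
      exact le_trans (htermH n u) (le_ciSup (bddH u) n)
  have hHtend : ∀ u, Filter.Tendsto (fun n => H n u) Filter.atTop
      (nhds (⨆ F, term F u)) := by
    intro u
    rw [← hsup_eq u]
    exact tendsto_atTop_ciSup (hHmono u) (bddH u)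
  have hPmeas : Measurable fun u => ⨆ F, term F u :=
    measurable_of_tendsto_metrizable hHmeas (tendsto_pi_nhds.mpr hHtend)
  have hm₁ : Measurable fun u => (ξ₁ u Set.univ).toReal :=
    (measurable_mass hfin₁ hsupp₁ hmeas₁).ennreal_toReal
  have hm₂ : Measurable fun u => (ξ₂ u Set.univ).toReal :=
    (measurable_mass hfin₂ hsupp₂ hmeas₂).ennreal_toReal
  have : (fun u => tvNorm (ξ₁ u) (ξ₂ u) (hfin₁ u) (hfin₂ u))
      = fun u => 2 * (⨆ F, term F u)
          - ((ξ₁ u Set.univ).toReal - (ξ₂ u Set.univ).toReal) := by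
    funext u
    haveI := hfin₁ u
    haveI := hfin₂ u
    exact tvNorm_formula (ξ₁ u) (ξ₂ u)
  rw [this]
  exact ((measurable_const.mul hPmeas).sub (hm₁.sub hm₂))

end TVMeas

section Pointwise

lemma popIntegrand_diff_bound
    (mmax D sIn k V gbar lamBar kg klam : ℝ)
    (rg lam : ℝ → ℝ → ℝ) (Q : Measure ℝ)
    (hyp : ChemostatHyps mmax D sIn k V gbar lamBar kg klam rg lam Q)
    (f : ℝ → ℝ) (hf : ContDiff ℝ 1 f)
    (hf1 : ∀ x ∈ Set.Icc (0:ℝ) mmax, |f x| ≤ 1)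
    (hf2 : ∀ x ∈ Set.Icc (0:ℝ) mmax, |deriv f x| ≤ 1)
    (S₁ S₂ : ℝ → ℝ) (ξ₁ ξ₂ : ℝ → Measure ℝ)
    (hsol₁ : IsWeakSolution mmax D sIn k V rg lam Q S₁ ξ₁)
    (hsol₂ : IsWeakSolution mmax D sIn k V rg lam Q S₂ ξ₂)
    (u : ℝ) (hu : 0 ≤ u) (Cm : ℝ)
    (hC : (∫ x in Set.Icc (0:ℝ) mmax, (1:ℝ) ∂(ξ₂ u)) ≤ Cm) :
    |popIntegrand mmax D rg lam Q f S₁ ξ₁ u - popIntegrand mmax D rg lam Q f S₂ ξ₂ u|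
      ≤ (gbar + 3 * lamBar + D) * tvNorm (ξ₁ u) (ξ₂ u) (hsol₁.xi_fin u) (hsol₂.xi_fin u)
        + Cm * (kg + 3 * klam) * |S₁ u - S₂ u| := by
  haveI := hsol₁.xi_fin u
  haveI := hsol₂.xi_fin u
  haveI := hyp.Q_prob
  have hs₁ : 0 ≤ S₁ u := hsol₁.S_nonneg u hu
  have hs₂ : 0 ≤ S₂ u := hsol₂.S_nonneg u hu
  have hgbar := hyp.gbar_pos.le
  have hlamBar := hyp.lamBar_pos.le
  have hD := hyp.D_pos.le
  have hfc : Continuous f := hf.continuous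
  have hfd : Continuous (deriv f) := hf.continuous_deriv le_rfl
  -- bounded versions of the integrands
  set G : ℝ → ℝ → ℝ := fun s => Set.indicator (Set.Icc (0:ℝ) mmax)
    (fun x => rg s x * deriv f x) with hG_def
  set K : ℝ → ℝ → ℝ := fun s => Set.indicator (Set.Icc (0:ℝ) mmax)
    (fun x => ∫ α in Set.Icc (0:ℝ) 1, lam s x * (f (α * x) + f ((1 - α) * x) - f x) ∂Q)
    with hK_def
  set Ff : ℝ → ℝ := Set.indicator (Set.Icc (0:ℝ) mmax) f with hFf_def
  -- measure of Q on [0,1]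
  have hQ1 : Q (Set.Icc (0:ℝ) 1) = 1 := by
    have h := measure_add_measure_compl (μ := Q) (measurableSet_Icc (a := (0:ℝ)) (b := (1:ℝ)))
    rw [hyp.Q_supp, add_zero] at h
    rw [h]; exact measure_univ
  have hQr : ((Q.restrict (Set.Icc (0:ℝ) 1)) Set.univ).toReal = 1 := by
    rw [Measure.restrict_apply_univ, hQ1]; simp
  have hQae : ∀ᵐ α ∂(Q.restrict (Set.Icc (0:ℝ) 1)), α ∈ Set.Icc (0:ℝ) 1 :=
    ae_restrict_mem measurableSet_Icc
  -- membership facts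
  have hmem : ∀ α ∈ Set.Icc (0:ℝ) 1, ∀ x ∈ Set.Icc (0:ℝ) mmax,
      α * x ∈ Set.Icc (0:ℝ) mmax ∧ (1 - α) * x ∈ Set.Icc (0:ℝ) mmax := by
    intro α hα x hx
    obtain ⟨hα0, hα1⟩ := hα
    obtain ⟨hx0, hx1⟩ := hx
    constructor
    · exact ⟨mul_nonneg hα0 hx0, le_trans (mul_le_of_le_one_left hx0 hα1) hx1⟩
    · exact ⟨mul_nonneg (by linarith) hx0,
        le_trans (mul_le_of_le_one_left hx0 (by linarith)) hx1⟩
  have hsum3 : ∀ α ∈ Set.Icc (0:ℝ) 1, ∀ x ∈ Set.Icc (0:ℝ) mmax,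
      |f (α * x) + f ((1 - α) * x) - f x| ≤ 3 := by
    intro α hα x hx
    obtain ⟨h1, h2⟩ := hmem α hα x hx
    have := hf1 _ h1
    have := hf1 _ h2
    have := hf1 _ hx
    calc |f (α * x) + f ((1 - α) * x) - f x|
        ≤ |f (α * x) + f ((1 - α) * x)| + |f x| := abs_sub _ _
    _ ≤ 3 := by linarith [abs_add_le (f (α * x)) (f ((1 - α) * x))]
  -- measurability
  have hGm : ∀ s, Measurable (G s) := fun s =>
    (((hyp.rg_meas s).mul hfd.measurable)).indicator measurableSet_Icc
  have hKinm : ∀ s, Measurable fun x =>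
      ∫ α in Set.Icc (0:ℝ) 1, lam s x * (f (α * x) + f ((1 - α) * x) - f x) ∂Q := by
    intro s
    have hum : StronglyMeasurable (Function.uncurry fun (x α : ℝ) =>
        lam s x * (f (α * x) + f ((1 - α) * x) - f x)) := by
      apply Measurable.stronglyMeasurable
      apply Measurable.mul
      · exact (hyp.lam_meas s).comp measurable_fst
      · have hc : Continuous fun p : ℝ × ℝ =>
            f (p.2 * p.1) + f ((1 - p.2) * p.1) - f p.1 := by
          apply Continuous.sub
          · exact (hfc.comp (continuous_snd.mul continuous_fst)).add
              (hfc.comp ((continuous_const.sub continuous_snd).mul continuous_fst))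
          · exact hfc.comp continuous_fst
        exact hc.measurable
    exact (hum.integral_prod_right).measurable
  have hKm : ∀ s, Measurable (K s) := fun s =>
    (hKinm s).indicator measurableSet_Icc
  have hFfm : Measurable Ff := hfc.measurable.indicator measurableSet_Icc
  -- bounds
  have hGb : ∀ s, 0 ≤ s → ∀ x, |G s x| ≤ gbar := by
    intro s hs x
    by_cases hx : x ∈ Set.Icc (0:ℝ) mmax
    · rw [hG_def]
      simp only [Set.indicator_of_mem hx]
      rw [abs_mul, abs_of_nonneg (hyp.rg_nonneg s hs x hx)]
      calc rg s x * |deriv f x| ≤ gbar * 1 :=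
        mul_le_mul (hyp.rg_le s hs x hx) (hf2 x hx) (abs_nonneg _) hgbar
      _ = gbar := mul_one _
    · rw [hG_def]; simp only [Set.indicator_of_notMem hx]; simpa using hgbar
  have hGdiff : ∀ x, |G (S₁ u) x - G (S₂ u) x| ≤ kg * |S₁ u - S₂ u| := by
    intro x
    have hrhs : 0 ≤ kg * |S₁ u - S₂ u| := mul_nonneg hyp.kg_nonneg (abs_nonneg _)
    by_cases hx : x ∈ Set.Icc (0:ℝ) mmax
    · rw [hG_def]
      simp only [Set.indicator_of_mem hx]
      rw [← sub_mul, abs_mul]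
      calc |rg (S₁ u) x - rg (S₂ u) x| * |deriv f x|
          ≤ (kg * |S₁ u - S₂ u|) * 1 :=
        mul_le_mul (hyp.rg_lip _ _ hs₁ hs₂ x hx) (hf2 x hx) (abs_nonneg _) hrhs
      _ = kg * |S₁ u - S₂ u| := mul_one _
    · rw [hG_def]; simp only [Set.indicator_of_notMem hx]; simpa using hrhs
  have hKinb : ∀ s, 0 ≤ s → ∀ x ∈ Set.Icc (0:ℝ) mmax, ∀ α ∈ Set.Icc (0:ℝ) 1,
      |lam s x * (f (α * x) + f ((1 - α) * x) - f x)| ≤ lamBar * 3 := by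
    intro s hs x hx α hα
    rw [abs_mul, abs_of_nonneg (hyp.lam_nonneg s hs x hx)]
    exact mul_le_mul (hyp.lam_le s hs x hx) (hsum3 α hα x hx) (abs_nonneg _) hlamBar
  have hKint : ∀ s, 0 ≤ s → ∀ x ∈ Set.Icc (0:ℝ) mmax,
      Integrable (fun α => lam s x * (f (α * x) + f ((1 - α) * x) - f x))
        (Q.restrict (Set.Icc (0:ℝ) 1)) := by
    intro s hs x hx
    refine (integrable_const (lamBar * 3)).mono' ?_ ?_
    · exact (Continuous.aestronglyMeasurable (by
        apply Continuous.mul continuous_const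
        apply Continuous.sub
        · exact (hfc.comp (continuous_id.mul continuous_const)).add
            (hfc.comp ((continuous_const.sub continuous_id).mul continuous_const))
        · exact continuous_const))
    · filter_upwards [hQae] with α hα
      rw [Real.norm_eq_abs]; exact hKinb s hs x hx α hα
  have hKb : ∀ s, 0 ≤ s → ∀ x, |K s x| ≤ 3 * lamBar := by
    intro s hs x
    by_cases hx : x ∈ Set.Icc (0:ℝ) mmax
    · rw [hK_def]
      simp only [Set.indicator_of_mem hx]
      have := norm_integral_le_of_norm_le_const
        (μ := Q.restrict (Set.Icc (0:ℝ) 1)) (C := lamBar * 3)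
        (f := fun α => lam s x * (f (α * x) + f ((1 - α) * x) - f x))
        (by filter_upwards [hQae] with α hα
            rw [Real.norm_eq_abs]; exact hKinb s hs x hx α hα)
      rw [measureReal_def, hQr, mul_one, Real.norm_eq_abs] at this
      linarith
    · rw [hK_def]; simp only [Set.indicator_of_notMem hx]
      simp; positivity
  have hKdiff : ∀ x, |K (S₁ u) x - K (S₂ u) x| ≤ 3 * klam * |S₁ u - S₂ u| := by
    intro x
    have hrhs : 0 ≤ 3 * klam * |S₁ u - S₂ u| := mul_nonneg (mul_nonneg (by norm_num) hyp.klam_nonneg) (abs_nonneg _)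
    by_cases hx : x ∈ Set.Icc (0:ℝ) mmax
    · rw [hK_def]
      simp only [Set.indicator_of_mem hx]
      rw [← integral_sub (hKint _ hs₁ x hx) (hKint _ hs₂ x hx)]
      have hre : ∀ α : ℝ, lam (S₁ u) x * (f (α * x) + f ((1 - α) * x) - f x)
          - lam (S₂ u) x * (f (α * x) + f ((1 - α) * x) - f x)
          = (lam (S₁ u) x - lam (S₂ u) x) * (f (α * x) + f ((1 - α) * x) - f x) :=
        fun α => by ring
      rw [integral_congr_ae (Filter.Eventually.of_forall hre)]
      have := norm_integral_le_of_norm_le_const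
        (μ := Q.restrict (Set.Icc (0:ℝ) 1)) (C := klam * |S₁ u - S₂ u| * 3)
        (f := fun α => (lam (S₁ u) x - lam (S₂ u) x)
          * (f (α * x) + f ((1 - α) * x) - f x))
        (by filter_upwards [hQae] with α hα
            rw [Real.norm_eq_abs, abs_mul]
            exact mul_le_mul (hyp.lam_lip _ _ hs₁ hs₂ x hx) (hsum3 α hα x hx)
              (abs_nonneg _) (mul_nonneg hyp.klam_nonneg (abs_nonneg _)))
      rw [measureReal_def, hQr, mul_one, Real.norm_eq_abs] at this
      linarith [this]
    · rw [hK_def]; simp only [Set.indicator_of_notMem hx]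
      simpa using hrhs
  have hFfb : ∀ x, |Ff x| ≤ 1 := by
    intro x
    by_cases hx : x ∈ Set.Icc (0:ℝ) mmax
    · rw [hFf_def]; simp only [Set.indicator_of_mem hx]; exact hf1 x hx
    · rw [hFf_def]; simp only [Set.indicator_of_notMem hx]; simp
  -- rewrite popIntegrand via the bounded versions
  have hpop : ∀ (S : ℝ → ℝ) (ξ : ℝ → Measure ℝ),
      popIntegrand mmax D rg lam Q f S ξ u
        = (∫ x, G (S u) x ∂(ξ u)) + (∫ x, K (S u) x ∂(ξ u)) - D * ∫ x, Ff x ∂(ξ u) := by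
    intro S ξ
    rw [popIntegrand, hG_def, hK_def, hFf_def,
      integral_indicator measurableSet_Icc, integral_indicator measurableSet_Icc,
      integral_indicator measurableSet_Icc]
  -- total variation estimates
  set tv := tvNorm (ξ₁ u) (ξ₂ u) (hsol₁.xi_fin u) (hsol₂.xi_fin u) with htv_def
  have htv0 : 0 ≤ tv := ENNReal.toReal_nonneg
  have hT1 : |(∫ x, G (S₁ u) x ∂(ξ₁ u)) - ∫ x, G (S₁ u) x ∂(ξ₂ u)| ≤ gbar * tv :=
    abs_integral_sub_le_tv _ _ (hGm _) (hGb _ hs₁)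
  have hT2 : |(∫ x, K (S₁ u) x ∂(ξ₁ u)) - ∫ x, K (S₁ u) x ∂(ξ₂ u)| ≤ (3 * lamBar) * tv :=
    abs_integral_sub_le_tv _ _ (hKm _) (hKb _ hs₁)
  have hT3 : |(∫ x, Ff x ∂(ξ₁ u)) - ∫ x, Ff x ∂(ξ₂ u)| ≤ 1 * tv :=
    abs_integral_sub_le_tv _ _ hFfm hFfb
  -- mass of ξ₂ u
  have hmass : ((ξ₂ u) Set.univ).toReal ≤ Cm := by
    have h1 : ((ξ₂ u) Set.univ).toReal = ∫ x in Set.Icc (0:ℝ) mmax, (1:ℝ) ∂(ξ₂ u) := by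
      rw [set_integral_eq_integral hsol₂.xi_supp u, integral_const, smul_eq_mul, mul_one]
      rfl
    linarith [h1 ▸ hC]
  have hmass0 : (0:ℝ) ≤ ((ξ₂ u) Set.univ).toReal := ENNReal.toReal_nonneg
  -- Lipschitz estimates against ξ₂
  have hintb : ∀ (g : ℝ → ℝ), Measurable g → ∀ M : ℝ, (∀ x, |g x| ≤ M) →
      Integrable g (ξ₂ u) := by
    intro g hg M hb
    refine (integrable_const M).mono' hg.aestronglyMeasurable ?_
    exact Filter.Eventually.of_forall fun x => by simpa [Real.norm_eq_abs] using hb x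
  have hL1 : |(∫ x, G (S₁ u) x ∂(ξ₂ u)) - ∫ x, G (S₂ u) x ∂(ξ₂ u)|
      ≤ (kg * |S₁ u - S₂ u|) * ((ξ₂ u) Set.univ).toReal := by
    rw [← integral_sub (hintb _ (hGm _) gbar (hGb _ hs₁)) (hintb _ (hGm _) gbar (hGb _ hs₂))]
    have := norm_integral_le_of_norm_le_const (μ := ξ₂ u)
      (C := kg * |S₁ u - S₂ u|) (f := fun x => G (S₁ u) x - G (S₂ u) x)
      (Filter.Eventually.of_forall fun x => by
        simpa [Real.norm_eq_abs] using hGdiff x)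
    rwa [Real.norm_eq_abs] at this
  have hL2 : |(∫ x, K (S₁ u) x ∂(ξ₂ u)) - ∫ x, K (S₂ u) x ∂(ξ₂ u)|
      ≤ (3 * klam * |S₁ u - S₂ u|) * ((ξ₂ u) Set.univ).toReal := by
    rw [← integral_sub (hintb _ (hKm _) (3 * lamBar) (hKb _ hs₁))
      (hintb _ (hKm _) (3 * lamBar) (hKb _ hs₂))]
    have := norm_integral_le_of_norm_le_const (μ := ξ₂ u)
      (C := 3 * klam * |S₁ u - S₂ u|) (f := fun x => K (S₁ u) x - K (S₂ u) x)
      (Filter.Eventually.of_forall fun x => by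
        simpa [Real.norm_eq_abs] using hKdiff x)
    rwa [Real.norm_eq_abs] at this
  -- combine
  rw [hpop S₁ ξ₁, hpop S₂ ξ₂]
  set a1 := ∫ x, G (S₁ u) x ∂(ξ₁ u) with ha1
  set a2 := ∫ x, G (S₁ u) x ∂(ξ₂ u) with ha2
  set a3 := ∫ x, G (S₂ u) x ∂(ξ₂ u) with ha3
  set b1 := ∫ x, K (S₁ u) x ∂(ξ₁ u) with hb1
  set b2 := ∫ x, K (S₁ u) x ∂(ξ₂ u) with hb2
  set b3 := ∫ x, K (S₂ u) x ∂(ξ₂ u) with hb3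
  set c1 := ∫ x, Ff x ∂(ξ₁ u) with hc1
  set c2 := ∫ x, Ff x ∂(ξ₂ u) with hc2
  have key : a1 + b1 - D * c1 - (a3 + b3 - D * c2)
      = (a1 - a2) + (a2 - a3) + ((b1 - b2) + (b2 - b3)) - D * (c1 - c2) := by ring
  rw [key]
  have hM1 : (kg * |S₁ u - S₂ u|) * ((ξ₂ u) Set.univ).toReal
      ≤ (kg * |S₁ u - S₂ u|) * Cm :=
    mul_le_mul_of_nonneg_left hmass (mul_nonneg hyp.kg_nonneg (abs_nonneg _))
  have hM2 : (3 * klam * |S₁ u - S₂ u|) * ((ξ₂ u) Set.univ).toReal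
      ≤ (3 * klam * |S₁ u - S₂ u|) * Cm :=
    mul_le_mul_of_nonneg_left hmass
      (mul_nonneg (mul_nonneg (by norm_num) hyp.klam_nonneg) (abs_nonneg _))
  have hL1' := hL1.trans hM1
  have hL2' := hL2.trans hM2
  have hDc1 : D * (c1 - c2) ≤ D * |c1 - c2| :=
    mul_le_mul_of_nonneg_left (le_abs_self _) hD
  have hDc2 : -(D * |c1 - c2|) ≤ D * (c1 - c2) := by
    have := mul_le_mul_of_nonneg_left (neg_abs_le (c1 - c2)) hD
    linarith
  have hD3 : D * |c1 - c2| ≤ D * (1 * tv) := mul_le_mul_of_nonneg_left hT3 hD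
  have hfin : (gbar * tv) + (kg * |S₁ u - S₂ u|) * Cm + ((3 * lamBar) * tv)
      + (3 * klam * |S₁ u - S₂ u|) * Cm + D * (1 * tv)
      = (gbar + 3 * lamBar + D) * tv + Cm * (kg + 3 * klam) * |S₁ u - S₂ u| := by ring
  rw [abs_le]
  constructor
  · linarith [neg_abs_le (a1 - a2), neg_abs_le (a2 - a3), neg_abs_le (b1 - b2),
      neg_abs_le (b2 - b3), hT1, hT2, hL1', hL2', hDc1, hD3, hfin]
  · linarith [le_abs_self (a1 - a2), le_abs_self (a2 - a3), le_abs_self (b1 - b2),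
      le_abs_self (b2 - b3), hT1, hT2, hL1', hL2', hDc2, hD3, hfin]

end Pointwise

end Aux

/-- For two weak solutions `(S¹, ξ¹)`, `(S², ξ²)` of the limit chemostat
system with the same initial population `ξ¹_0 = ξ²_0`, setting
`C_t = sup_{0 ≤ u ≤ t} (⟨ξ¹_u, 1⟩ + ⟨ξ²_u, 1⟩)`, for every `t ≥ 0` and every `C¹` test
function `f` with `‖f‖_∞ ≤ 1`, `‖f'‖_∞ ≤ 1` on `X`:
`|⟨ξ¹_t − ξ²_t, f⟩| ≤ (ḡ + 3λ̄ + D) ∫_0^t ‖ξ¹_u − ξ²_u‖_TV du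
   + C_t (k_g + 3 k_λ) ∫_0^t |S¹_u − S²_u| du`. -/
theorem weak_solutions_pairing_estimate
    (mmax D sIn k V gbar lamBar kg klam : ℝ)
    (rg lam : ℝ → ℝ → ℝ) (Q : Measure ℝ)
    (hyp : ChemostatHyps mmax D sIn k V gbar lamBar kg klam rg lam Q)
    (S₁ S₂ : ℝ → ℝ) (ξ₁ ξ₂ : ℝ → Measure ℝ)
    (hsol₁ : IsWeakSolution mmax D sIn k V rg lam Q S₁ ξ₁)
    (hsol₂ : IsWeakSolution mmax D sIn k V rg lam Q S₂ ξ₂)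
    (hxi0 : ξ₁ 0 = ξ₂ 0) :
    ∀ t, 0 ≤ t → ∀ f : ℝ → ℝ, ContDiff ℝ 1 f →
      (∀ x ∈ Set.Icc (0:ℝ) mmax, |f x| ≤ 1) →
      (∀ x ∈ Set.Icc (0:ℝ) mmax, |deriv f x| ≤ 1) →
      |(∫ x in Set.Icc (0:ℝ) mmax, f x ∂(ξ₁ t))
          - ∫ x in Set.Icc (0:ℝ) mmax, f x ∂(ξ₂ t)|
        ≤ (gbar + 3 * lamBar + D)
              * (∫ u in (0:ℝ)..t, tvNorm (ξ₁ u) (ξ₂ u) (hsol₁.xi_fin u) (hsol₂.xi_fin u))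
          + (⨆ u : Set.Icc (0:ℝ) t,
                ((∫ x in Set.Icc (0:ℝ) mmax, (1:ℝ) ∂(ξ₁ (u:ℝ)))
                  + ∫ x in Set.Icc (0:ℝ) mmax, (1:ℝ) ∂(ξ₂ (u:ℝ))))
              * (kg + 3 * klam) * ∫ u in (0:ℝ)..t, |S₁ u - S₂ u| := by
  intro t ht f hf hf1 hf2
  haveI : Nonempty (Set.Icc (0:ℝ) t) := ⟨⟨0, le_refl 0, ht⟩⟩
  obtain ⟨C₁, hC₁⟩ := hsol₁.xi_locbdd (fun _ => 1) continuous_const t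
  obtain ⟨C₂, hC₂⟩ := hsol₂.xi_locbdd (fun _ => 1) continuous_const t
  set Cm := ⨆ u : Set.Icc (0:ℝ) t,
      ((∫ x in Set.Icc (0:ℝ) mmax, (1:ℝ) ∂(ξ₁ (u:ℝ)))
        + ∫ x in Set.Icc (0:ℝ) mmax, (1:ℝ) ∂(ξ₂ (u:ℝ))) with hCm_def
  have hbddC : BddAbove (Set.range fun u : Set.Icc (0:ℝ) t =>
      ((∫ x in Set.Icc (0:ℝ) mmax, (1:ℝ) ∂(ξ₁ (u:ℝ)))
        + ∫ x in Set.Icc (0:ℝ) mmax, (1:ℝ) ∂(ξ₂ (u:ℝ)))) := by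
    refine ⟨C₁ + C₂, ?_⟩
    rintro _ ⟨u, rfl⟩
    have h1 := hC₁ u u.2
    have h2 := hC₂ u u.2
    have h1' := (abs_le.mp h1).2
    have h2' := (abs_le.mp h2).2
    exact add_le_add h1' h2'
  have hCm_ge : ∀ u ∈ Set.Icc (0:ℝ) t,
      (∫ x in Set.Icc (0:ℝ) mmax, (1:ℝ) ∂(ξ₂ u)) ≤ Cm := by
    intro u hu
    have h1 : (0:ℝ) ≤ ∫ x in Set.Icc (0:ℝ) mmax, (1:ℝ) ∂(ξ₁ u) :=
      integral_nonneg fun _ => by norm_num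
    calc (∫ x in Set.Icc (0:ℝ) mmax, (1:ℝ) ∂(ξ₂ u))
        ≤ (∫ x in Set.Icc (0:ℝ) mmax, (1:ℝ) ∂(ξ₁ u))
          + ∫ x in Set.Icc (0:ℝ) mmax, (1:ℝ) ∂(ξ₂ u) := by linarith
    _ ≤ Cm := le_ciSup hbddC ⟨u, hu⟩
  set d : ℝ → ℝ := fun u =>
    popIntegrand mmax D rg lam Q f S₁ ξ₁ u - popIntegrand mmax D rg lam Q f S₂ ξ₂ u
    with hd_def
  have hdint : IntervalIntegrable d volume 0 t :=
    (hsol₁.xi_int f hf t ht).sub (hsol₂.xi_int f hf t ht)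
  have hkey : (∫ x in Set.Icc (0:ℝ) mmax, f x ∂(ξ₁ t))
      - (∫ x in Set.Icc (0:ℝ) mmax, f x ∂(ξ₂ t)) = ∫ u in (0:ℝ)..t, d u := by
    rw [hsol₁.xi_eq f hf t ht, hsol₂.xi_eq f hf t ht, hxi0, hd_def,
      intervalIntegral.integral_sub (hsol₁.xi_int f hf t ht) (hsol₂.xi_int f hf t ht)]
    ring
  rw [hkey]
  set tv : ℝ → ℝ := fun u => tvNorm (ξ₁ u) (ξ₂ u) (hsol₁.xi_fin u) (hsol₂.xi_fin u)
    with htv_def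
  have htvmeas : Measurable tv :=
    measurable_tv hsol₁.xi_fin hsol₂.xi_fin hsol₁.xi_supp hsol₂.xi_supp
      hsol₁.xi_meas hsol₂.xi_meas
  have htvnn : ∀ u, 0 ≤ tv u := fun u => ENNReal.toReal_nonneg
  have hmass_eq : ∀ (ξ : ℝ → Measure ℝ) (hfin : ∀ u, IsFiniteMeasure (ξ u))
      (hsupp : ∀ u, ξ u (Set.Icc (0:ℝ) mmax)ᶜ = 0) (u : ℝ),
      ((ξ u) Set.univ).toReal = ∫ x in Set.Icc (0:ℝ) mmax, (1:ℝ) ∂(ξ u) := by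
    intro ξ hfin hsupp u
    haveI := hfin u
    rw [set_integral_eq_integral hsupp u, integral_const, smul_eq_mul, mul_one]
    rfl
  have htvbd : ∀ u ∈ Set.Icc (0:ℝ) t, tv u ≤ C₁ + C₂ := by
    intro u hu
    haveI := hsol₁.xi_fin u
    haveI := hsol₂.xi_fin u
    have h := tv_le_masses (ξ₁ u) (ξ₂ u)
    rw [hmass_eq ξ₁ hsol₁.xi_fin hsol₁.xi_supp u,
      hmass_eq ξ₂ hsol₂.xi_fin hsol₂.xi_supp u] at h
    have h1 := (abs_le.mp (hC₁ u hu)).2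
    have h2 := (abs_le.mp (hC₂ u hu)).2
    calc tv u ≤ _ := h
    _ ≤ C₁ + C₂ := add_le_add h1 h2
  have htvint : IntervalIntegrable tv volume 0 t := by
    rw [intervalIntegrable_iff, Set.uIoc_of_le ht]
    apply Measure.integrableOn_of_bounded (M := C₁ + C₂)
    · exact (measure_Ioc_lt_top).ne
    · exact htvmeas.aestronglyMeasurable
    · filter_upwards [ae_restrict_mem measurableSet_Ioc] with u hu
      rw [Real.norm_eq_abs, abs_of_nonneg (htvnn u)]
      exact htvbd u ⟨hu.1.le, hu.2⟩
  have hSint : IntervalIntegrable (fun u => |S₁ u - S₂ u|) volume 0 t :=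
    ((hsol₁.S_cont.sub hsol₂.S_cont).abs).intervalIntegrable 0 t
  set A := gbar + 3 * lamBar + D with hA_def
  set B := Cm * (kg + 3 * klam) with hB_def
  have hptwise : ∀ u ∈ Set.Icc (0:ℝ) t, |d u| ≤ A * tv u + B * |S₁ u - S₂ u| := by
    intro u hu
    exact popIntegrand_diff_bound mmax D sIn k V gbar lamBar kg klam rg lam Q hyp
      f hf hf1 hf2 S₁ S₂ ξ₁ ξ₂ hsol₁ hsol₂ u hu.1 Cm (hCm_ge u hu)
  have hrhsint : IntervalIntegrable (fun u => A * tv u + B * |S₁ u - S₂ u|) volume 0 t :=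
    (htvint.const_mul A).add (hSint.const_mul B)
  calc |∫ u in (0:ℝ)..t, d u| ≤ ∫ u in (0:ℝ)..t, |d u| :=
    intervalIntegral.abs_integral_le_integral_abs ht
  _ ≤ ∫ u in (0:ℝ)..t, (A * tv u + B * |S₁ u - S₂ u|) :=
    intervalIntegral.integral_mono_on ht hdint.abs hrhsint hptwise
  _ = A * (∫ u in (0:ℝ)..t, tv u) + B * ∫ u in (0:ℝ)..t, |S₁ u - S₂ u| := by
    rw [intervalIntegral.integral_add (htvint.const_mul A) (hSint.const_mul B),
      intervalIntegral.integral_const_mul, intervalIntegral.integral_const_mul]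
  _ = _ := by rw [hB_def]
end
end

section
/- Let (S¹, ξ¹) and (S², ξ²) be two weak solutions of the limit chemostat system with S¹_0 = S²_0, and set C_t = sup_{0 ≤ u ≤ t} (⟨ξ¹_u, 1⟩ + ⟨ξ²_u, 1⟩). Then for every t ≥ 0, |S¹_t − S²_t| ≤ (D + (k/V)·C_t·k_g) ∫_0^t |S¹_u − S²_u| du + (k/V)·ḡ ∫_0^t ‖ξ¹_u − ξ²_u‖_TV du. -/
open MeasureTheory Filter

noncomputable section

namespace ChemAux

/-- Open set associated to a finite set of rational pairs. -/
def Bopen (F : Finset (ℚ × ℚ)) : Set ℝ :=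
  ⋃ p ∈ F, Set.Ioo (p.1 : ℝ) (p.2 : ℝ)

lemma Bopen_isOpen (F : Finset (ℚ × ℚ)) : IsOpen (Bopen F) :=
  isOpen_biUnion fun _ _ => isOpen_Ioo

lemma Bopen_measurableSet (F : Finset (ℚ × ℚ)) : MeasurableSet (Bopen F) :=
  (Bopen_isOpen F).measurableSet

lemma Bopen_mono {F G : Finset (ℚ × ℚ)} (h : F ⊆ G) : Bopen F ⊆ Bopen G := by
  refine Set.iUnion₂_subset fun p hp => ?_
  exact Set.subset_biUnion_of_mem (u := fun p => Set.Ioo (p.1:ℝ) (p.2:ℝ)) (h hp)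

lemma Bopen_compl_nonempty (F : Finset (ℚ × ℚ)) : (Bopen F)ᶜ.Nonempty := by
  refine ⟨((F.sup fun p => ⌈p.2⌉₊ : ℕ) : ℝ), ?_⟩
  intro hx
  simp only [Bopen, Set.mem_iUnion, Set.mem_Ioo] at hx
  obtain ⟨p, hpF, _, h2⟩ := hx
  have hle : (p.2 : ℚ) ≤ ((⌈p.2⌉₊ : ℕ) : ℚ) := Nat.le_ceil _
  have hsup : (⌈p.2⌉₊ : ℕ) ≤ F.sup fun p => ⌈p.2⌉₊ := Finset.le_sup (f := fun p : ℚ × ℚ => ⌈p.2⌉₊) hpF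
  have h3 : (p.2 : ℝ) ≤ ((F.sup fun p => ⌈p.2⌉₊ : ℕ) : ℝ) := by
    calc (p.2 : ℝ) ≤ ((⌈p.2⌉₊ : ℕ) : ℝ) := by exact_mod_cast hle
      _ ≤ _ := by exact_mod_cast hsup
  linarith


lemma measurable_measureOpen (mmax : ℝ) (ξ : ℝ → Measure ℝ)
    (hfin : ∀ t, IsFiniteMeasure (ξ t))
    (hsupp : ∀ t, (ξ t) (Set.Icc (0:ℝ) mmax)ᶜ = 0)
    (hmeas : ∀ g : ℝ → ℝ, Continuous g →
      Measurable fun u => ∫ x in Set.Icc (0:ℝ) mmax, g x ∂(ξ u))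
    {B : Set ℝ} (hB : IsOpen B) (hBc : Bᶜ.Nonempty) :
    Measurable fun u => ((ξ u) B).toReal := by
  classical
  set g : ℕ → ℝ → ℝ := fun n x => min 1 ((n : ℝ) * Metric.infDist x Bᶜ) with hgdef
  have hgc : ∀ n, Continuous (g n) :=
    fun n => continuous_const.min (continuous_const.mul (Metric.continuous_infDist_pt _))
  have hg0 : ∀ n x, 0 ≤ g n x := fun n x =>
    le_min zero_le_one (mul_nonneg (Nat.cast_nonneg n) Metric.infDist_nonneg)
  have hg1 : ∀ n x, g n x ≤ 1 := fun n x => min_le_left _ _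
  have hlim : ∀ x, Filter.Tendsto (fun n => g n x) Filter.atTop
      (nhds (B.indicator (fun _ => (1:ℝ)) x)) := by
    intro x
    by_cases hx : x ∈ B
    · have hd : 0 < Metric.infDist x Bᶜ := by
        rw [← hB.isClosed_compl.notMem_iff_infDist_pos hBc]
        simpa using hx
      rw [Set.indicator_of_mem hx]
      have hev : ∀ᶠ n : ℕ in Filter.atTop, g n x = 1 := by
        obtain ⟨n₀, hn₀⟩ := exists_nat_ge (1 / Metric.infDist x Bᶜ)
        filter_upwards [Filter.eventually_ge_atTop n₀] with n hn
        have h1 : (1:ℝ) ≤ n₀ * Metric.infDist x Bᶜ := by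
          rw [div_le_iff₀ hd] at hn₀; linarith
        have h2 : (n₀:ℝ) ≤ (n:ℝ) := Nat.cast_le.2 hn
        have : (1:ℝ) ≤ n * Metric.infDist x Bᶜ := by nlinarith
        simp [hgdef, min_eq_left this]
      exact Filter.Tendsto.congr' (hev.mono fun n h => h.symm) tendsto_const_nhds
    · rw [Set.indicator_of_notMem hx]
      have hdx : Metric.infDist x Bᶜ = 0 := Metric.infDist_zero_of_mem (by simpa using hx)
      have hz : ∀ n : ℕ, g n x = 0 := fun n => by simp [hgdef, hdx]
      simpa [hz] using (tendsto_const_nhds : Filter.Tendsto (fun _ : ℕ => (0:ℝ)) _ _)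
  have key : ∀ u, Filter.Tendsto (fun n => ∫ x in Set.Icc (0:ℝ) mmax, g n x ∂(ξ u))
      Filter.atTop (nhds (((ξ u) B).toReal)) := by
    intro u
    haveI := hfin u
    haveI : IsFiniteMeasure ((ξ u).restrict (Set.Icc (0:ℝ) mmax)) :=
      ⟨by rw [Measure.restrict_apply_univ]; exact measure_lt_top _ _⟩
    have hInd : ∫ x in Set.Icc (0:ℝ) mmax, B.indicator (fun _ => (1:ℝ)) x ∂(ξ u)
        = ((ξ u) B).toReal := by
      rw [integral_indicator hB.measurableSet, setIntegral_const, smul_eq_mul, mul_one,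
        measureReal_def, Measure.restrict_apply hB.measurableSet]
      congr 1
      have hd : (ξ u) (B \ Set.Icc (0:ℝ) mmax) = 0 :=
        measure_mono_null (Set.diff_subset_compl _ _) (hsupp u)
      rw [← measure_inter_add_diff B (measurableSet_Icc (a := (0:ℝ)) (b := mmax)), hd, add_zero]
    have := tendsto_integral_of_dominated_convergence
      (μ := (ξ u).restrict (Set.Icc (0:ℝ) mmax)) (F := fun n x => g n x)
      (f := fun x => B.indicator (fun _ => (1:ℝ)) x) (fun _ => (1:ℝ))
      (fun n => (hgc n).aestronglyMeasurable)
      (integrable_const 1)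
      (fun n => Filter.Eventually.of_forall fun x => by
        rw [Real.norm_eq_abs, abs_of_nonneg (hg0 n x)]; exact hg1 n x)
      (Filter.Eventually.of_forall fun x => hlim x)
    rwa [hInd] at this
  exact measurable_of_tendsto_metrizable' Filter.atTop
    (fun n => hmeas (g n) (hgc n)) (tendsto_pi_nhds.2 key)


lemma jordan_apply (μ ν : Measure ℝ) [IsFiniteMeasure μ] [IsFiniteMeasure ν]
    {E : Set ℝ} (hE : MeasurableSet E) :
    (μ E).toReal - (ν E).toReal
      = ((μ.toSignedMeasure - ν.toSignedMeasure).toJordanDecomposition.posPart E).toReal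
        - ((μ.toSignedMeasure - ν.toSignedMeasure).toJordanDecomposition.negPart E).toReal := by
  set s := μ.toSignedMeasure - ν.toSignedMeasure with hs
  have h1 : s E = (μ E).toReal - (ν E).toReal := Measure.toSignedMeasure_sub_apply hE
  have h2 : s.toJordanDecomposition.toSignedMeasure = s :=
    s.toSignedMeasure_toJordanDecomposition
  have h3 : s.toJordanDecomposition.toSignedMeasure E
      = (s.toJordanDecomposition.posPart E).toReal
        - (s.toJordanDecomposition.negPart E).toReal := by
    rw [MeasureTheory.JordanDecomposition.toSignedMeasure]
    exact Measure.toSignedMeasure_sub_apply hE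
  calc (μ E).toReal - (ν E).toReal = s E := h1.symm
    _ = s.toJordanDecomposition.toSignedMeasure E := by rw [h2]
    _ = _ := h3

lemma iSup_ofReal_le (μ ν : Measure ℝ) [IsFiniteMeasure μ] :
    (⨆ F : Finset (ℚ × ℚ), ENNReal.ofReal ((μ (Bopen F)).toReal - (ν (Bopen F)).toReal))
      ≤ μ Set.univ := by
  refine iSup_le fun F => ?_
  calc ENNReal.ofReal ((μ (Bopen F)).toReal - (ν (Bopen F)).toReal)
      ≤ ENNReal.ofReal ((μ (Bopen F)).toReal) :=
        ENNReal.ofReal_le_ofReal (sub_le_self _ ENNReal.toReal_nonneg)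
    _ = μ (Bopen F) := ENNReal.ofReal_toReal (measure_ne_top _ _)
    _ ≤ μ Set.univ := measure_mono (Set.subset_univ _)

lemma posPart_univ_eq (μ ν : Measure ℝ) [IsFiniteMeasure μ] [IsFiniteMeasure ν] :
    (μ.toSignedMeasure - ν.toSignedMeasure).toJordanDecomposition.posPart Set.univ
      = ⨆ F : Finset (ℚ × ℚ),
          ENNReal.ofReal ((μ (Bopen F)).toReal - (ν (Bopen F)).toReal) := by
  classical
  set s := μ.toSignedMeasure - ν.toSignedMeasure with hs
  set P := s.toJordanDecomposition.posPart with hP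
  set N := s.toJordanDecomposition.negPart with hN
  have hφ : ∀ {E : Set ℝ}, MeasurableSet E →
      (μ E).toReal - (ν E).toReal = (P E).toReal - (N E).toReal :=
    fun hE => jordan_apply μ ν hE
  apply le_antisymm
  · -- hard direction
    have key : ∀ ε : ℝ, 0 < ε → ∃ F : Finset (ℚ × ℚ),
        (P Set.univ).toReal - ε ≤ (μ (Bopen F)).toReal - (ν (Bopen F)).toReal := by
      intro ε hε
      obtain ⟨S, hSm, _, _, hPS, hNSc⟩ :=
        s.toJordanDecomposition.exists_compl_positive_negative
      have hPuniv : P Set.univ = P Sᶜ := by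
        rw [← measure_add_measure_compl hSm, hPS, zero_add]
      obtain ⟨U, hSU, hUopen, hNU⟩ := Set.exists_isOpen_lt_of_lt (μ := N) Sᶜ
          (ENNReal.ofReal (ε/2)) (by rw [hNSc]; exact ENNReal.ofReal_pos.2 (by linarith))
      have hPU : P U = P Set.univ :=
        le_antisymm (measure_mono (Set.subset_univ _))
          (by rw [hPuniv]; exact measure_mono hSU)
      have hsU : (P Set.univ).toReal - ε/2 ≤ (μ U).toReal - (ν U).toReal := by
        rw [hφ hUopen.measurableSet, hPU]
        have hNUr : (N U).toReal ≤ ε/2 := by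
          calc (N U).toReal ≤ (ENNReal.ofReal (ε/2)).toReal :=
              ENNReal.toReal_mono (by simp) hNU.le
            _ = ε/2 := ENNReal.toReal_ofReal (by linarith)
        linarith
      -- approximate U from inside by finite unions of rational intervals
      set e : ℚ × ℚ ≃ ℕ := Denumerable.eqv (ℚ × ℚ) with he
      set Fn : ℕ → Finset (ℚ × ℚ) := fun n =>
        ((Finset.range n).image e.symm).filter
          (fun p => Set.Ioo (p.1:ℝ) (p.2:ℝ) ⊆ U) with hFn
      have hmono : Monotone fun n => Bopen (Fn n) := by
        intro a b hab
        exact Bopen_mono (Finset.filter_subset_filter _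
          (Finset.image_subset_image (Finset.range_subset_range.2 hab)))
      have hUnion : (⋃ n, Bopen (Fn n)) = U := by
        apply Set.Subset.antisymm
        · refine Set.iUnion_subset fun n => Set.iUnion₂_subset fun p hp => ?_
          exact (Finset.mem_filter.1 hp).2
        · intro x hxU
          obtain ⟨v, hv, hxv, hvU⟩ :=
            Real.isTopologicalBasis_Ioo_rat.exists_subset_of_mem_open hxU hUopen
          simp only [Set.mem_iUnion, Set.mem_singleton_iff] at hv
          obtain ⟨a, b, hab, rfl⟩ := hv
          have hmem : ((a, b) : ℚ × ℚ) ∈ Fn (e (a, b) + 1) :=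
            Finset.mem_filter.2 ⟨Finset.mem_image.2
              ⟨e (a, b), Finset.mem_range.2 (Nat.lt_succ_self _), e.symm_apply_apply _⟩, hvU⟩
          exact Set.mem_iUnion.2 ⟨e (a, b) + 1, Set.mem_biUnion hmem hxv⟩
      have h1 : Filter.Tendsto (fun n => (μ (Bopen (Fn n))).toReal)
          Filter.atTop (nhds ((μ U).toReal)) := by
        have := tendsto_measure_iUnion_atTop (μ := μ) hmono
        rw [hUnion] at this
        exact (ENNReal.tendsto_toReal (measure_ne_top μ U)).comp this
      have h2 : Filter.Tendsto (fun n => (ν (Bopen (Fn n))).toReal)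
          Filter.atTop (nhds ((ν U).toReal)) := by
        have := tendsto_measure_iUnion_atTop (μ := ν) hmono
        rw [hUnion] at this
        exact (ENNReal.tendsto_toReal (measure_ne_top ν U)).comp this
      have htend := h1.sub h2
      have hlt : (μ U).toReal - (ν U).toReal - ε/2
          < (μ U).toReal - (ν U).toReal := by linarith
      obtain ⟨n, hn⟩ := (htend.eventually (eventually_gt_nhds hlt)).exists
      exact ⟨Fn n, by linarith⟩
    have hfin : (⨆ F : Finset (ℚ × ℚ),
        ENNReal.ofReal ((μ (Bopen F)).toReal - (ν (Bopen F)).toReal)) ≠ ⊤ :=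
      ((iSup_ofReal_le μ ν).trans_lt (measure_lt_top μ _)).ne
    rw [← ENNReal.ofReal_toReal (measure_ne_top P Set.univ)]
    refine ENNReal.le_of_forall_pos_le_add fun ε hε _ => ?_
    obtain ⟨F, hF⟩ := key ε (by exact_mod_cast hε)
    calc ENNReal.ofReal ((P Set.univ).toReal)
        = ENNReal.ofReal ((P Set.univ).toReal - ε + ε) := by rw [sub_add_cancel]
      _ ≤ ENNReal.ofReal ((P Set.univ).toReal - ε) + ENNReal.ofReal ε :=
          ENNReal.ofReal_add_le
      _ ≤ (⨆ F : Finset (ℚ × ℚ),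
            ENNReal.ofReal ((μ (Bopen F)).toReal - (ν (Bopen F)).toReal)) + ε := by
          refine add_le_add ((ENNReal.ofReal_le_ofReal hF).trans (le_iSup
            (fun F : Finset (ℚ × ℚ) =>
              ENNReal.ofReal ((μ (Bopen F)).toReal - (ν (Bopen F)).toReal)) F)) ?_
          simp
  · refine iSup_le fun F => ?_
    have hB := Bopen_measurableSet F
    have h1 : (μ (Bopen F)).toReal - (ν (Bopen F)).toReal ≤ (P Set.univ).toReal := by
      rw [hφ hB]
      have hPm : (P (Bopen F)).toReal ≤ (P Set.univ).toReal :=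
        ENNReal.toReal_mono (measure_ne_top _ _) (measure_mono (Set.subset_univ _))
      have := ENNReal.toReal_nonneg (a := N (Bopen F))
      linarith
    calc ENNReal.ofReal ((μ (Bopen F)).toReal - (ν (Bopen F)).toReal)
        ≤ ENNReal.ofReal ((P Set.univ).toReal) := ENNReal.ofReal_le_ofReal h1
      _ = P Set.univ := ENNReal.ofReal_toReal (measure_ne_top _ _)

lemma negPart_univ_eq (μ ν : Measure ℝ) [IsFiniteMeasure μ] [IsFiniteMeasure ν] :
    (μ.toSignedMeasure - ν.toSignedMeasure).toJordanDecomposition.negPart Set.univ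
      = ⨆ F : Finset (ℚ × ℚ),
          ENNReal.ofReal ((ν (Bopen F)).toReal - (μ (Bopen F)).toReal) := by
  rw [← posPart_univ_eq ν μ]
  have h : ν.toSignedMeasure - μ.toSignedMeasure
      = -(μ.toSignedMeasure - ν.toSignedMeasure) := (neg_sub _ _).symm
  rw [h, MeasureTheory.SignedMeasure.toJordanDecomposition_neg,
    MeasureTheory.JordanDecomposition.neg_posPart]


lemma tvNorm_eq (μ ν : Measure ℝ) [hμ : IsFiniteMeasure μ] [hν : IsFiniteMeasure ν] :
    tvNorm μ ν hμ hν
      = ((μ.toSignedMeasure - ν.toSignedMeasure).toJordanDecomposition.posPart Set.univ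
          + (μ.toSignedMeasure - ν.toSignedMeasure).toJordanDecomposition.negPart
              Set.univ).toReal := by
  unfold tvNorm MeasureTheory.SignedMeasure.totalVariation
  rw [Measure.add_apply]

lemma tvNorm_nonneg (μ ν : Measure ℝ) (hμ : IsFiniteMeasure μ) (hν : IsFiniteMeasure ν) :
    0 ≤ tvNorm μ ν hμ hν := ENNReal.toReal_nonneg

lemma tvNorm_le (μ ν : Measure ℝ) [hμ : IsFiniteMeasure μ] [hν : IsFiniteMeasure ν] :
    tvNorm μ ν hμ hν ≤ (μ Set.univ).toReal + (ν Set.univ).toReal := by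
  rw [tvNorm_eq, posPart_univ_eq, negPart_univ_eq]
  calc ((⨆ F : Finset (ℚ × ℚ),
        ENNReal.ofReal ((μ (Bopen F)).toReal - (ν (Bopen F)).toReal))
      + ⨆ F : Finset (ℚ × ℚ),
        ENNReal.ofReal ((ν (Bopen F)).toReal - (μ (Bopen F)).toReal)).toReal
      ≤ (μ Set.univ + ν Set.univ).toReal :=
        ENNReal.toReal_mono
          (ENNReal.add_ne_top.2 ⟨measure_ne_top _ _, measure_ne_top _ _⟩)
          (add_le_add (iSup_ofReal_le μ ν) (iSup_ofReal_le ν μ))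
    _ = (μ Set.univ).toReal + (ν Set.univ).toReal :=
        ENNReal.toReal_add (measure_ne_top _ _) (measure_ne_top _ _)

lemma measurable_tvNorm (mmax : ℝ) (ξ₁ ξ₂ : ℝ → Measure ℝ)
    (hfin₁ : ∀ t, IsFiniteMeasure (ξ₁ t)) (hfin₂ : ∀ t, IsFiniteMeasure (ξ₂ t))
    (hsupp₁ : ∀ t, (ξ₁ t) (Set.Icc (0:ℝ) mmax)ᶜ = 0)
    (hsupp₂ : ∀ t, (ξ₂ t) (Set.Icc (0:ℝ) mmax)ᶜ = 0)
    (hmeas₁ : ∀ g : ℝ → ℝ, Continuous g →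
      Measurable fun u => ∫ x in Set.Icc (0:ℝ) mmax, g x ∂(ξ₁ u))
    (hmeas₂ : ∀ g : ℝ → ℝ, Continuous g →
      Measurable fun u => ∫ x in Set.Icc (0:ℝ) mmax, g x ∂(ξ₂ u)) :
    Measurable fun u => tvNorm (ξ₁ u) (ξ₂ u) (hfin₁ u) (hfin₂ u) := by
  have hB₁ : ∀ F : Finset (ℚ × ℚ), Measurable fun u => ((ξ₁ u) (Bopen F)).toReal :=
    fun F => measurable_measureOpen mmax ξ₁ hfin₁ hsupp₁ hmeas₁
      (Bopen_isOpen F) (Bopen_compl_nonempty F)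
  have hB₂ : ∀ F : Finset (ℚ × ℚ), Measurable fun u => ((ξ₂ u) (Bopen F)).toReal :=
    fun F => measurable_measureOpen mmax ξ₂ hfin₂ hsupp₂ hmeas₂
      (Bopen_isOpen F) (Bopen_compl_nonempty F)
  have h1 : Measurable fun u => ⨆ F : Finset (ℚ × ℚ),
      ENNReal.ofReal (((ξ₁ u) (Bopen F)).toReal - ((ξ₂ u) (Bopen F)).toReal) :=
    Measurable.iSup fun F => ENNReal.measurable_ofReal.comp ((hB₁ F).sub (hB₂ F))
  have h2 : Measurable fun u => ⨆ F : Finset (ℚ × ℚ),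
      ENNReal.ofReal (((ξ₂ u) (Bopen F)).toReal - ((ξ₁ u) (Bopen F)).toReal) :=
    Measurable.iSup fun F => ENNReal.measurable_ofReal.comp ((hB₂ F).sub (hB₁ F))
  have heq : (fun u => tvNorm (ξ₁ u) (ξ₂ u) (hfin₁ u) (hfin₂ u))
      = fun u => ((⨆ F : Finset (ℚ × ℚ),
            ENNReal.ofReal (((ξ₁ u) (Bopen F)).toReal - ((ξ₂ u) (Bopen F)).toReal))
          + ⨆ F : Finset (ℚ × ℚ),
            ENNReal.ofReal (((ξ₂ u) (Bopen F)).toReal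
              - ((ξ₁ u) (Bopen F)).toReal)).toReal := by
    funext u
    haveI := hfin₁ u; haveI := hfin₂ u
    rw [tvNorm_eq, posPart_univ_eq, negPart_univ_eq]
  rw [heq]
  exact (h1.add h2).ennreal_toReal

lemma integrableOn_of_bound (ρ : Measure ℝ) [IsFiniteMeasure ρ] (g : ℝ → ℝ)
    (hg : Measurable g) {s : Set ℝ} (hs : MeasurableSet s) (C : ℝ)
    (h : ∀ x ∈ s, |g x| ≤ C) : IntegrableOn g s ρ := by
  refine Measure.integrableOn_of_bounded (M := C) (measure_ne_top ρ s)
    hg.aestronglyMeasurable ?_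
  filter_upwards [ae_restrict_mem hs] with x hx
  rw [Real.norm_eq_abs]; exact h x hx

lemma abs_setIntegral_sub_le_tvNorm (μ ν : Measure ℝ)
    [hμ : IsFiniteMeasure μ] [hν : IsFiniteMeasure ν]
    {g : ℝ → ℝ} (hg : Measurable g) {C : ℝ} (hC : 0 ≤ C) {s : Set ℝ}
    (hs : MeasurableSet s) (hbound : ∀ x ∈ s, |g x| ≤ C) :
    |(∫ x in s, g x ∂μ) - ∫ x in s, g x ∂ν| ≤ C * tvNorm μ ν hμ hν := by
  set sm := μ.toSignedMeasure - ν.toSignedMeasure with hsmdef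
  set P := sm.toJordanDecomposition.posPart with hPdef
  set N := sm.toJordanDecomposition.negPart with hNdef
  have hJ : P.toSignedMeasure - N.toSignedMeasure = sm :=
    sm.toSignedMeasure_toJordanDecomposition
  have hmeq : μ + N = ν + P := by
    rw [← Measure.toSignedMeasure_eq_toSignedMeasure_iff,
      Measure.toSignedMeasure_add, Measure.toSignedMeasure_add]
    have h2 := sub_eq_sub_iff_add_eq_add.mp
      (hJ.symm : μ.toSignedMeasure - ν.toSignedMeasure
        = P.toSignedMeasure - N.toSignedMeasure)
    rw [h2]; exact add_comm _ _
  have hint : ∀ (ρ : Measure ℝ), IsFiniteMeasure ρ → IntegrableOn g s ρ := by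
    intro ρ hρ
    exact integrableOn_of_bound ρ g hg hs C hbound
  have h₁ : (∫ x in s, g x ∂(μ + N)) = ∫ x in s, g x ∂(ν + P) := by rw [hmeq]
  rw [Measure.restrict_add, Measure.restrict_add,
    integral_add_measure (hint μ hμ) (hint N inferInstance),
    integral_add_measure (hint ν hν) (hint P inferInstance)] at h₁
  have hb : ∀ (ρ : Measure ℝ), IsFiniteMeasure ρ →
      |∫ x in s, g x ∂ρ| ≤ C * (ρ Set.univ).toReal := by
    intro ρ hρ
    haveI : IsFiniteMeasure (ρ.restrict s) :=
      ⟨by rw [Measure.restrict_apply_univ]; exact measure_lt_top ρ s⟩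
    have hbd : ∀ᵐ x ∂(ρ.restrict s), ‖g x‖ ≤ C := by
      filter_upwards [ae_restrict_mem hs] with x hx
      rw [Real.norm_eq_abs]; exact hbound x hx
    have := norm_integral_le_of_norm_le_const (μ := ρ.restrict s) (f := g) hbd
    rw [Real.norm_eq_abs] at this
    refine this.trans (mul_le_mul_of_nonneg_left ?_ hC)
    rw [measureReal_def, Measure.restrict_apply_univ]
    exact ENNReal.toReal_mono (measure_ne_top _ _) (measure_mono (Set.subset_univ _))
  have heq2 : (∫ x in s, g x ∂μ) - ∫ x in s, g x ∂ν
      = (∫ x in s, g x ∂P) - ∫ x in s, g x ∂N := by linarith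
  rw [heq2]
  calc |(∫ x in s, g x ∂P) - ∫ x in s, g x ∂N|
      ≤ |∫ x in s, g x ∂P| + |∫ x in s, g x ∂N| := abs_sub _ _
    _ ≤ C * (P Set.univ).toReal + C * (N Set.univ).toReal :=
        add_le_add (hb P inferInstance) (hb N inferInstance)
    _ = C * tvNorm μ ν hμ hν := by
        rw [tvNorm_eq,
          ENNReal.toReal_add (measure_ne_top _ _) (measure_ne_top _ _)]
        ring

end ChemAux

/-- For two weak solutions `(S¹, ξ¹)`, `(S², ξ²)` of the limit chemostat
system with the same initial substrate concentration `S¹_0 = S²_0`, setting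
`C_t = sup_{0 ≤ u ≤ t} (⟨ξ¹_u, 1⟩ + ⟨ξ²_u, 1⟩)`, for every `t ≥ 0`:
`|S¹_t − S²_t| ≤ (D + (k/V) C_t k_g) ∫_0^t |S¹_u − S²_u| du
   + (k/V) ḡ ∫_0^t ‖ξ¹_u − ξ²_u‖_TV du`. -/
theorem weak_solutions_substrate_estimate
    (mmax D sIn k V gbar lamBar kg klam : ℝ)
    (rg lam : ℝ → ℝ → ℝ) (Q : Measure ℝ)
    (hyp : ChemostatHyps mmax D sIn k V gbar lamBar kg klam rg lam Q)
    (S₁ S₂ : ℝ → ℝ) (ξ₁ ξ₂ : ℝ → Measure ℝ)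
    (hsol₁ : IsWeakSolution mmax D sIn k V rg lam Q S₁ ξ₁)
    (hsol₂ : IsWeakSolution mmax D sIn k V rg lam Q S₂ ξ₂)
    (hS0 : S₁ 0 = S₂ 0) :
    ∀ t, 0 ≤ t →
      |S₁ t - S₂ t|
        ≤ (D + (k / V)
                * (⨆ u : Set.Icc (0:ℝ) t,
                    ((∫ x in Set.Icc (0:ℝ) mmax, (1:ℝ) ∂(ξ₁ (u:ℝ)))
                      + ∫ x in Set.Icc (0:ℝ) mmax, (1:ℝ) ∂(ξ₂ (u:ℝ))))
                * kg) * (∫ u in (0:ℝ)..t, |S₁ u - S₂ u|)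
          + (k / V) * gbar
              * ∫ u in (0:ℝ)..t, tvNorm (ξ₁ u) (ξ₂ u) (hsol₁.xi_fin u) (hsol₂.xi_fin u) := by
  
  intro t ht
  classical
  obtain ⟨C₁, hC₁⟩ := hsol₁.xi_locbdd (fun _ => 1) continuous_const t
  obtain ⟨C₂, hC₂⟩ := hsol₂.xi_locbdd (fun _ => 1) continuous_const t
  have hkV : 0 < k / V := div_pos hyp.k_pos hyp.V_pos
  set tv : ℝ → ℝ := fun u => tvNorm (ξ₁ u) (ξ₂ u) (hsol₁.xi_fin u) (hsol₂.xi_fin u)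
    with htvdef
  set Csup : ℝ := ⨆ u : Set.Icc (0:ℝ) t,
      ((∫ x in Set.Icc (0:ℝ) mmax, (1:ℝ) ∂(ξ₁ (u:ℝ)))
        + ∫ x in Set.Icc (0:ℝ) mmax, (1:ℝ) ∂(ξ₂ (u:ℝ))) with hCsup
  have hbdd : BddAbove (Set.range fun v : Set.Icc (0:ℝ) t =>
      (∫ x in Set.Icc (0:ℝ) mmax, (1:ℝ) ∂(ξ₁ (v:ℝ)))
        + ∫ x in Set.Icc (0:ℝ) mmax, (1:ℝ) ∂(ξ₂ (v:ℝ))) := by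
    refine ⟨C₁ + C₂, ?_⟩
    rintro r ⟨v, rfl⟩
    exact add_le_add ((le_abs_self _).trans (hC₁ v v.2))
      ((le_abs_self _).trans (hC₂ v v.2))
  have hmass : ∀ u ∈ Set.Icc (0:ℝ) t,
      ((ξ₁ u) (Set.Icc (0:ℝ) mmax)).toReal ≤ Csup := by
    intro u hu
    haveI := hsol₁.xi_fin u
    haveI := hsol₂.xi_fin u
    have h1 : ((ξ₁ u) (Set.Icc (0:ℝ) mmax)).toReal
        = ∫ x in Set.Icc (0:ℝ) mmax, (1:ℝ) ∂(ξ₁ u) := by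
      rw [setIntegral_const, smul_eq_mul, mul_one, measureReal_def]
    have h2 : (0:ℝ) ≤ ∫ x in Set.Icc (0:ℝ) mmax, (1:ℝ) ∂(ξ₂ u) :=
      integral_nonneg fun _ => zero_le_one
    have h3 : (∫ x in Set.Icc (0:ℝ) mmax, (1:ℝ) ∂(ξ₁ u))
        + ∫ x in Set.Icc (0:ℝ) mmax, (1:ℝ) ∂(ξ₂ u) ≤ Csup := by
      rw [hCsup]
      exact le_ciSup hbdd (⟨u, hu⟩ : Set.Icc (0:ℝ) t)
    rw [h1]; linarith
  have hXuniv : ∀ (ξ : ℝ → Measure ℝ), (∀ s, ξ s (Set.Icc (0:ℝ) mmax)ᶜ = 0) →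
      ∀ u, (ξ u) Set.univ = (ξ u) (Set.Icc (0:ℝ) mmax) := by
    intro ξ hsupp u
    rw [← measure_add_measure_compl (measurableSet_Icc (a := (0:ℝ)) (b := mmax)),
      hsupp u, add_zero]
  have htvb : ∀ u ∈ Set.Icc (0:ℝ) t, tv u ≤ C₁ + C₂ := by
    intro u hu
    haveI := hsol₁.xi_fin u
    haveI := hsol₂.xi_fin u
    refine (ChemAux.tvNorm_le (ξ₁ u) (ξ₂ u)).trans ?_
    have e₁ : ((ξ₁ u) Set.univ).toReal = ∫ x in Set.Icc (0:ℝ) mmax, (1:ℝ) ∂(ξ₁ u) := by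
      rw [hXuniv ξ₁ hsol₁.xi_supp u, setIntegral_const, smul_eq_mul, mul_one, measureReal_def]
    have e₂ : ((ξ₂ u) Set.univ).toReal = ∫ x in Set.Icc (0:ℝ) mmax, (1:ℝ) ∂(ξ₂ u) := by
      rw [hXuniv ξ₂ hsol₂.xi_supp u, setIntegral_const, smul_eq_mul, mul_one, measureReal_def]
    rw [e₁, e₂]
    exact add_le_add ((le_abs_self _).trans (hC₁ u hu))
      ((le_abs_self _).trans (hC₂ u hu))
  have htv0 : ∀ u, 0 ≤ tv u := fun u => ENNReal.toReal_nonneg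
  -- pointwise bound
  have hpt : ∀ u ∈ Set.Icc (0:ℝ) t,
      |subIntegrand mmax D sIn k V rg S₁ ξ₁ u - subIntegrand mmax D sIn k V rg S₂ ξ₂ u|
        ≤ (D + k / V * Csup * kg) * |S₁ u - S₂ u| + k / V * gbar * tv u := by
    intro u hu
    haveI := hsol₁.xi_fin u
    haveI := hsol₂.xi_fin u
    have hS₁u := hsol₁.S_nonneg u hu.1
    have hS₂u := hsol₂.S_nonneg u hu.1
    set I₁ := ∫ x in Set.Icc (0:ℝ) mmax, rg (S₁ u) x ∂(ξ₁ u) with hI₁def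
    set I₁' := ∫ x in Set.Icc (0:ℝ) mmax, rg (S₂ u) x ∂(ξ₁ u) with hI₁'def
    set I₂ := ∫ x in Set.Icc (0:ℝ) mmax, rg (S₂ u) x ∂(ξ₂ u) with hI₂def
    have hdiff : subIntegrand mmax D sIn k V rg S₁ ξ₁ u
        - subIntegrand mmax D sIn k V rg S₂ ξ₂ u
        = D * (S₂ u - S₁ u) - (k / V) * (I₁ - I₂) := by
      simp only [subIntegrand, ← hI₁def, ← hI₂def]; ring
    have hint₁ : IntegrableOn (rg (S₁ u)) (Set.Icc (0:ℝ) mmax) (ξ₁ u) :=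
      ChemAux.integrableOn_of_bound _ _ (hyp.rg_meas _) measurableSet_Icc gbar
        (fun x hx => by
          rw [abs_of_nonneg (hyp.rg_nonneg _ hS₁u x hx)]; exact hyp.rg_le _ hS₁u x hx)
    have hint₁' : IntegrableOn (rg (S₂ u)) (Set.Icc (0:ℝ) mmax) (ξ₁ u) :=
      ChemAux.integrableOn_of_bound _ _ (hyp.rg_meas _) measurableSet_Icc gbar
        (fun x hx => by
          rw [abs_of_nonneg (hyp.rg_nonneg _ hS₂u x hx)]; exact hyp.rg_le _ hS₂u x hx)
    have hA : |I₁ - I₁'| ≤ kg * |S₁ u - S₂ u| * ((ξ₁ u) (Set.Icc (0:ℝ) mmax)).toReal := by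
      rw [hI₁def, hI₁'def, ← integral_sub hint₁ hint₁']
      haveI : IsFiniteMeasure ((ξ₁ u).restrict (Set.Icc (0:ℝ) mmax)) :=
        ⟨by rw [Measure.restrict_apply_univ]; exact measure_lt_top _ _⟩
      have hbd : ∀ᵐ x ∂((ξ₁ u).restrict (Set.Icc (0:ℝ) mmax)),
          ‖rg (S₁ u) x - rg (S₂ u) x‖ ≤ kg * |S₁ u - S₂ u| := by
        filter_upwards [ae_restrict_mem (measurableSet_Icc (a := (0:ℝ)) (b := mmax))]
          with x hx
        rw [Real.norm_eq_abs]
        exact hyp.rg_lip _ _ hS₁u hS₂u x hx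
      have h := norm_integral_le_of_norm_le_const
        (μ := (ξ₁ u).restrict (Set.Icc (0:ℝ) mmax))
        (f := fun x => rg (S₁ u) x - rg (S₂ u) x) hbd
      rw [Real.norm_eq_abs, measureReal_def, Measure.restrict_apply_univ] at h
      exact h
    have hB : |I₁' - I₂| ≤ gbar * tv u := by
      rw [hI₁'def, hI₂def]
      exact ChemAux.abs_setIntegral_sub_le_tvNorm (ξ₁ u) (ξ₂ u) (hyp.rg_meas _)
        hyp.gbar_pos.le measurableSet_Icc
        (fun x hx => by
          rw [abs_of_nonneg (hyp.rg_nonneg _ hS₂u x hx)]; exact hyp.rg_le _ hS₂u x hx)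
    have hm := hmass u hu
    have hmass0 : (0:ℝ) ≤ ((ξ₁ u) (Set.Icc (0:ℝ) mmax)).toReal := ENNReal.toReal_nonneg
    have habs0 : (0:ℝ) ≤ |S₁ u - S₂ u| := abs_nonneg _
    have hI : |I₁ - I₂| ≤ kg * |S₁ u - S₂ u| * ((ξ₁ u) (Set.Icc (0:ℝ) mmax)).toReal
        + gbar * tv u := (abs_sub_le I₁ I₁' I₂).trans (add_le_add hA hB)
    have hstep : k / V * |I₁ - I₂| ≤ k / V * (kg * |S₁ u - S₂ u| * Csup + gbar * tv u) := by
      refine mul_le_mul_of_nonneg_left (hI.trans ?_) hkV.le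
      have : kg * |S₁ u - S₂ u| * ((ξ₁ u) (Set.Icc (0:ℝ) mmax)).toReal
          ≤ kg * |S₁ u - S₂ u| * Csup :=
        mul_le_mul_of_nonneg_left hm (mul_nonneg hyp.kg_nonneg habs0)
      linarith
    calc |subIntegrand mmax D sIn k V rg S₁ ξ₁ u - subIntegrand mmax D sIn k V rg S₂ ξ₂ u|
        = |D * (S₂ u - S₁ u) - k / V * (I₁ - I₂)| := by rw [hdiff]
      _ ≤ |D * (S₂ u - S₁ u)| + |k / V * (I₁ - I₂)| := abs_sub _ _
      _ = D * |S₁ u - S₂ u| + k / V * |I₁ - I₂| := by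
          rw [abs_mul, abs_mul, abs_of_pos hyp.D_pos, abs_of_pos hkV, abs_sub_comm (S₂ u)]
      _ ≤ D * |S₁ u - S₂ u| + k / V * (kg * |S₁ u - S₂ u| * Csup + gbar * tv u) := by
          linarith
      _ = (D + k / V * Csup * kg) * |S₁ u - S₂ u| + k / V * gbar * tv u := by ring
  -- integrability
  have hi₁ := hsol₁.S_int t ht
  have hi₂ := hsol₂.S_int t ht
  have hsub : IntervalIntegrable
      (fun u => subIntegrand mmax D sIn k V rg S₁ ξ₁ u
        - subIntegrand mmax D sIn k V rg S₂ ξ₂ u) volume 0 t := hi₁.sub hi₂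
  have habs : IntervalIntegrable
      (fun u => |subIntegrand mmax D sIn k V rg S₁ ξ₁ u
        - subIntegrand mmax D sIn k V rg S₂ ξ₂ u|) volume 0 t := hsub.abs
  have htvmeas : Measurable tv := by
    rw [htvdef]
    exact ChemAux.measurable_tvNorm mmax ξ₁ ξ₂ hsol₁.xi_fin hsol₂.xi_fin
      hsol₁.xi_supp hsol₂.xi_supp hsol₁.xi_meas hsol₂.xi_meas
  have htvint : IntervalIntegrable tv volume 0 t := by
    rw [intervalIntegrable_iff, Set.uIoc_of_le ht]
    refine Measure.integrableOn_of_bounded (M := C₁ + C₂) ?_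
      htvmeas.aestronglyMeasurable ?_
    · exact (measure_Ioc_lt_top).ne
    · filter_upwards [ae_restrict_mem measurableSet_Ioc] with u hu
      rw [Real.norm_eq_abs, abs_of_nonneg (htv0 u)]
      exact htvb u ⟨hu.1.le, hu.2⟩
  have hrhs1 : IntervalIntegrable
      (fun u => (D + k / V * Csup * kg) * |S₁ u - S₂ u|) volume 0 t :=
    (continuous_const.mul (hsol₁.S_cont.sub hsol₂.S_cont).abs).intervalIntegrable 0 t
  have hrhs2 : IntervalIntegrable (fun u => k / V * gbar * tv u) volume 0 t :=
    htvint.const_mul _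
  have hrhs : IntervalIntegrable
      (fun u => (D + k / V * Csup * kg) * |S₁ u - S₂ u| + k / V * gbar * tv u)
      volume 0 t := hrhs1.add hrhs2
  have heq : S₁ t - S₂ t
      = ∫ u in (0:ℝ)..t, (subIntegrand mmax D sIn k V rg S₁ ξ₁ u
          - subIntegrand mmax D sIn k V rg S₂ ξ₂ u) := by
    rw [intervalIntegral.integral_sub hi₁ hi₂, hsol₁.S_eq t ht, hsol₂.S_eq t ht, hS0]
    ring
  calc |S₁ t - S₂ t|
      = |∫ u in (0:ℝ)..t, (subIntegrand mmax D sIn k V rg S₁ ξ₁ u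
          - subIntegrand mmax D sIn k V rg S₂ ξ₂ u)| := by rw [heq]
    _ ≤ ∫ u in (0:ℝ)..t, |subIntegrand mmax D sIn k V rg S₁ ξ₁ u
          - subIntegrand mmax D sIn k V rg S₂ ξ₂ u| :=
        intervalIntegral.abs_integral_le_integral_abs ht
    _ ≤ ∫ u in (0:ℝ)..t,
          ((D + k / V * Csup * kg) * |S₁ u - S₂ u| + k / V * gbar * tv u) :=
        intervalIntegral.integral_mono_on ht habs hrhs hpt
    _ = (D + k / V * Csup * kg) * (∫ u in (0:ℝ)..t, |S₁ u - S₂ u|)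
          + k / V * gbar * ∫ u in (0:ℝ)..t, tv u := by
        rw [intervalIntegral.integral_add hrhs1 hrhs2,
          intervalIntegral.integral_const_mul, intervalIntegral.integral_const_mul]
end
end

section
/- Let ν : [0,∞) → M_F(X) be such that u ↦ ∫_X ρ_g(s,x) ν_u(dx) is Borel measurable for each s ≥ 0 and u ↦ ν_u(X) is locally bounded. Let S : [0,∞) → ℝ be continuous with S_0 ≥ 0 and S_t = S_0 + ∫_0^t [D(s_in − S_u) − (k/V)∫_X ρ_g(S_u, x) ν_u(dx)] du for all t ≥ 0. Then 0 ≤ S_t ≤ max(S_0, s_in) for every t ≥ 0 (the substrate concentration remains nonnegative and bounded by the maximum of its initial value and the input concentration). -/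
open MeasureTheory Filter

noncomputable section

/-- If the substrate concentration `S` is continuous, starts from
`S_0 ≥ 0` and satisfies
`S_t = S_0 + ∫_0^t [D (s_in − S_u) − (k/V) ∫_X ρ_g(S_u, x) ν_u(dx)] du` for all `t ≥ 0`,
where `u ↦ ∫_X ρ_g(s,x) ν_u(dx)` is Borel measurable for each `s ≥ 0` and `u ↦ ν_u(X)` is
locally bounded, then `0 ≤ S_t ≤ max(S_0, s_in)` for every `t ≥ 0`. -/
theorem substrate_nonneg_and_bounded
    (mmax D sIn k V gbar kg : ℝ)
    (hmmax : 0 < mmax) (hD : 0 < D) (hsIn : 0 < sIn) (hk : 0 < k) (hV : 0 < V)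
    (hgbar : 0 < gbar) (hkg : 0 ≤ kg)
    (rg : ℝ → ℝ → ℝ)
    (hrg_meas : ∀ s : ℝ, Measurable (rg s))
    (hrg_nonneg : ∀ s, 0 ≤ s → ∀ x ∈ Set.Icc (0:ℝ) mmax, 0 ≤ rg s x)
    (hrg_le : ∀ s, 0 ≤ s → ∀ x ∈ Set.Icc (0:ℝ) mmax, rg s x ≤ gbar)
    (hrg_lip : ∀ s₁ s₂, 0 ≤ s₁ → 0 ≤ s₂ → ∀ x ∈ Set.Icc (0:ℝ) mmax,
      |rg s₁ x - rg s₂ x| ≤ kg * |s₁ - s₂|)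
    (hrg_zero : ∀ x ∈ Set.Icc (0:ℝ) mmax, rg 0 x = 0)
    (hrg_mmax : ∀ s, 0 ≤ s → rg s mmax = 0)
    -- `ρ_g` is extended to negative substrate concentrations by `ρ_g(s,x) = ρ_g(max(s,0),x)`
    (hrg_ext : ∀ s x, rg s x = rg (max s 0) x)
    (ν : ℝ → Measure ℝ) (hfin : ∀ u, IsFiniteMeasure (ν u))
    (hmeas : ∀ s, 0 ≤ s →
      Measurable fun u => ∫ x in Set.Icc (0:ℝ) mmax, rg s x ∂(ν u))
    (hlocbdd : ∀ T : ℝ, ∃ C : ℝ, ∀ u ∈ Set.Icc (0:ℝ) T,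
      ((ν u) (Set.Icc (0:ℝ) mmax)).toReal ≤ C)
    (S : ℝ → ℝ) (hS_cont : Continuous S) (hS0 : 0 ≤ S 0)
    (hS_int : ∀ t, 0 ≤ t → IntervalIntegrable
      (fun u => D * (sIn - S u) - (k / V) * ∫ x in Set.Icc (0:ℝ) mmax, rg (S u) x ∂(ν u))
      volume 0 t)
    (hS_eq : ∀ t, 0 ≤ t → S t = S 0 + ∫ u in (0:ℝ)..t,
      (D * (sIn - S u) - (k / V) * ∫ x in Set.Icc (0:ℝ) mmax, rg (S u) x ∂(ν u))) :
    ∀ t, 0 ≤ t → 0 ≤ S t ∧ S t ≤ max (S 0) sIn := by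

  intro t ht
  set f : ℝ → ℝ := fun u =>
    D * (sIn - S u) - (k / V) * ∫ x in Set.Icc (0:ℝ) mmax, rg (S u) x ∂(ν u) with hf
  -- split into adjacent intervals helper
  have hsplit : ∀ a, 0 ≤ a → a ≤ t → S t = S a + ∫ u in a..t, f u := by
    intro a ha hat
    have h1 : IntervalIntegrable f volume 0 a := hS_int a ha
    have h2 : IntervalIntegrable f volume a t := by
      refine (hS_int t ht).mono_set ?_
      refine Set.uIcc_subset_uIcc ?_ ?_
      · exact Set.mem_uIcc.mpr (Or.inl ⟨ha, hat⟩)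
      · exact Set.mem_uIcc.mpr (Or.inl ⟨ht, le_refl t⟩)
    have hadd := intervalIntegral.integral_add_adjacent_intervals h1 h2
    have hta := hS_eq t ht
    have haa := hS_eq a ha
    rw [hta, haa, ← hf]
    rw [← hadd]
    ring
  constructor
  · -- nonnegativity
    by_contra hneg
    push_neg at hneg
    have ht0 : 0 < t := by
      rcases lt_or_eq_of_le ht with h | h
      · exact h
      · rw [← h] at hneg; linarith
    set E := Set.Icc (0:ℝ) t ∩ {u | 0 ≤ S u} with hE
    have hE0 : (0:ℝ) ∈ E := ⟨⟨le_refl 0, ht⟩, hS0⟩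
    have hEne : E.Nonempty := ⟨0, hE0⟩
    have hEbdd : BddAbove E := ⟨t, fun u hu => hu.1.2⟩
    have hEclosed : IsClosed E :=
      isClosed_Icc.inter (isClosed_le continuous_const hS_cont)
    have haE : sSup E ∈ E := hEclosed.csSup_mem hEne hEbdd
    set a := sSup E with haDef
    have ha0 : 0 ≤ a := haE.1.1
    have hat : a ≤ t := haE.1.2
    have hSa : 0 ≤ S a := haE.2
    have hatlt : a < t := by
      rcases lt_or_eq_of_le hat with h | h
      · exact h
      · exact absurd (h ▸ hSa) (not_le.mpr hneg)
    have hIoc : ∀ u ∈ Set.Ioc a t, S u < 0 := by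
      intro u hu
      by_contra hge
      push_neg at hge
      have : u ∈ E := ⟨⟨le_trans ha0 (le_of_lt hu.1), hu.2⟩, hge⟩
      exact absurd (le_csSup hEbdd this) (not_le.mpr hu.1)
    have hfpos : ∀ u ∈ Set.Ioc a t, 0 ≤ f u := by
      intro u hu
      have hSu := hIoc u hu
      have hzero : (∫ x in Set.Icc (0:ℝ) mmax, rg (S u) x ∂(ν u)) = 0 := by
        have heq : Set.EqOn (fun x => rg (S u) x) (fun _ => (0:ℝ)) (Set.Icc (0:ℝ) mmax) := by
          intro x hx
          simp only
          rw [hrg_ext, max_eq_right (le_of_lt hSu)]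
          exact hrg_zero x hx
        rw [setIntegral_congr_fun measurableSet_Icc heq]
        simp
      simp only [hf, hzero, mul_zero, sub_zero]
      have : 0 < sIn - S u := by linarith
      positivity
    have hint : 0 ≤ ∫ u in a..t, f u := by
      rw [intervalIntegral.integral_of_le (le_of_lt hatlt)]
      exact setIntegral_nonneg measurableSet_Ioc hfpos
    have := hsplit a ha0 hat
    linarith
  · -- upper bound
    set M := max (S 0) sIn with hM
    by_contra hgt
    push_neg at hgt
    have hSM0 : S 0 ≤ M := le_max_left _ _
    have hsInM : sIn ≤ M := le_max_right _ _
    have ht0 : 0 < t := by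
      rcases lt_or_eq_of_le ht with h | h
      · exact h
      · rw [← h] at hgt; simp only [hM] at hgt; have := le_max_left (S 0) sIn; linarith
    set E := Set.Icc (0:ℝ) t ∩ {u | S u ≤ M} with hE
    have hE0 : (0:ℝ) ∈ E := ⟨⟨le_refl 0, ht⟩, hSM0⟩
    have hEne : E.Nonempty := ⟨0, hE0⟩
    have hEbdd : BddAbove E := ⟨t, fun u hu => hu.1.2⟩
    have hEclosed : IsClosed E :=
      isClosed_Icc.inter (isClosed_le hS_cont continuous_const)
    have haE : sSup E ∈ E := hEclosed.csSup_mem hEne hEbdd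
    set a := sSup E with haDef
    have ha0 : 0 ≤ a := haE.1.1
    have hat : a ≤ t := haE.1.2
    have hSa : S a ≤ M := haE.2
    have hatlt : a < t := by
      rcases lt_or_eq_of_le hat with h | h
      · exact h
      · exact absurd (h ▸ hSa) (not_le.mpr hgt)
    have hIoc : ∀ u ∈ Set.Ioc a t, M < S u := by
      intro u hu
      by_contra hge
      push_neg at hge
      have : u ∈ E := ⟨⟨le_trans ha0 (le_of_lt hu.1), hu.2⟩, hge⟩
      exact absurd (le_csSup hEbdd this) (not_le.mpr hu.1)
    have hfneg : ∀ u ∈ Set.Ioc a t, f u ≤ 0 := by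
      intro u hu
      have hSu := hIoc u hu
      have hSu0 : 0 ≤ S u := le_of_lt (lt_of_lt_of_le hsIn (le_trans hsInM (le_of_lt hSu)))
      have hIpos : 0 ≤ ∫ x in Set.Icc (0:ℝ) mmax, rg (S u) x ∂(ν u) :=
        setIntegral_nonneg measurableSet_Icc (fun x hx => hrg_nonneg (S u) hSu0 x hx)
      have h1 : D * (sIn - S u) ≤ 0 := by
        have : sIn - S u ≤ 0 := by
          have : sIn ≤ S u := le_trans hsInM (le_of_lt hSu)
          linarith
        exact mul_nonpos_of_nonneg_of_nonpos (le_of_lt hD) this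
      have h2 : 0 ≤ (k / V) * ∫ x in Set.Icc (0:ℝ) mmax, rg (S u) x ∂(ν u) :=
        mul_nonneg (le_of_lt (div_pos hk hV)) hIpos
      simp only [hf]
      linarith
    have hint : (∫ u in a..t, f u) ≤ 0 := by
      rw [intervalIntegral.integral_of_le (le_of_lt hatlt)]
      exact setIntegral_nonpos measurableSet_Ioc hfneg
    have := hsplit a ha0 hat
    linarith
end
end

section
/- Define ρ_s(s, ν) = D(s_in − s) − (k/V)∫_X ρ_g(s,x) ν(dx) for s ≥ 0 and ν ∈ M_F(X). Let ν : [0,∞) → M_F(X) be such that u ↦ ∫_X ρ_g(s,x) ν_u(dx) is Borel measurable for each s ≥ 0 and u ↦ ν_u(X) is locally bounded, and let S : [0,∞) → ℝ be continuous with S_0 ≥ 0 and S_t = S_0 + ∫_0^t ρ_s(S_u, ν_u) du for all t ≥ 0. Then for every u ≥ 0 one has ρ_s(S_u, ν_u) ≤ D·s_in and ρ_s(S_u, ν_u) ≥ −D·max(S_0, s_in) − (k/V)·ḡ·ν_u(X), and consequently for every t ≥ 0, ∫_0^t |ρ_s(S_u, ν_u)| du ≤ D·t·max(S_0, s_in)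 + (k/V)·ḡ·∫_0^t ν_u(X) du. -/
open MeasureTheory Filter

noncomputable section

/-- `ρ_s(s, ν) = D (s_in − s) − (k/V) ∫_X ρ_g(s, x) ν(dx)` with `X = [0, mmax]`. -/
def rhoS (mmax D sIn k V : ℝ) (rg : ℝ → ℝ → ℝ) (s : ℝ) (ν : Measure ℝ) : ℝ :=
  D * (sIn - s) - (k / V) * ∫ x in Set.Icc (0:ℝ) mmax, rg s x ∂ν

/-- Along a continuous solution `S` of the substrate equation
`S_t = S_0 + ∫_0^t ρ_s(S_u, ν_u) du` with `S_0 ≥ 0`, one has, for every `u ≥ 0`,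
`ρ_s(S_u, ν_u) ≤ D s_in` and
`ρ_s(S_u, ν_u) ≥ − D max(S_0, s_in) − (k/V) ḡ ν_u(X)`, and consequently, for every `t ≥ 0`,
`∫_0^t |ρ_s(S_u, ν_u)| du ≤ D t max(S_0, s_in) + (k/V) ḡ ∫_0^t ν_u(X) du`. -/
theorem rhoS_bounds
    (mmax D sIn k V gbar kg : ℝ)
    (hmmax : 0 < mmax) (hD : 0 < D) (hsIn : 0 < sIn) (hk : 0 < k) (hV : 0 < V)
    (hgbar : 0 < gbar) (hkg : 0 ≤ kg)
    (rg : ℝ → ℝ → ℝ)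
    (hrg_meas : ∀ s : ℝ, Measurable (rg s))
    (hrg_nonneg : ∀ s, 0 ≤ s → ∀ x ∈ Set.Icc (0:ℝ) mmax, 0 ≤ rg s x)
    (hrg_le : ∀ s, 0 ≤ s → ∀ x ∈ Set.Icc (0:ℝ) mmax, rg s x ≤ gbar)
    (hrg_lip : ∀ s₁ s₂, 0 ≤ s₁ → 0 ≤ s₂ → ∀ x ∈ Set.Icc (0:ℝ) mmax,
      |rg s₁ x - rg s₂ x| ≤ kg * |s₁ - s₂|)
    (hrg_zero : ∀ x ∈ Set.Icc (0:ℝ) mmax, rg 0 x = 0)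
    (hrg_mmax : ∀ s, 0 ≤ s → rg s mmax = 0)
    -- `ρ_g` is extended to negative substrate concentrations by `ρ_g(s,x) = ρ_g(max(s,0),x)`
    (hrg_ext : ∀ s x, rg s x = rg (max s 0) x)
    (ν : ℝ → Measure ℝ) (hfin : ∀ u, IsFiniteMeasure (ν u))
    (hmeas : ∀ s, 0 ≤ s →
      Measurable fun u => ∫ x in Set.Icc (0:ℝ) mmax, rg s x ∂(ν u))
    (hmass_meas : Measurable fun u => ((ν u) (Set.Icc (0:ℝ) mmax)).toReal)
    (hlocbdd : ∀ T : ℝ, ∃ C : ℝ, ∀ u ∈ Set.Icc (0:ℝ) T,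
      ((ν u) (Set.Icc (0:ℝ) mmax)).toReal ≤ C)
    (S : ℝ → ℝ) (hS_cont : Continuous S) (hS0 : 0 ≤ S 0)
    (hS_int : ∀ t, 0 ≤ t →
      IntervalIntegrable (fun u => rhoS mmax D sIn k V rg (S u) (ν u)) volume 0 t)
    (hS_eq : ∀ t, 0 ≤ t →
      S t = S 0 + ∫ u in (0:ℝ)..t, rhoS mmax D sIn k V rg (S u) (ν u)) :
    (∀ u, 0 ≤ u →
      rhoS mmax D sIn k V rg (S u) (ν u) ≤ D * sIn
      ∧ - (D * max (S 0) sIn) - (k / V) * gbar * ((ν u) (Set.Icc (0:ℝ) mmax)).toReal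
          ≤ rhoS mmax D sIn k V rg (S u) (ν u))
    ∧ ∀ t, 0 ≤ t →
        (∫ u in (0:ℝ)..t, |rhoS mmax D sIn k V rg (S u) (ν u)|)
          ≤ D * t * max (S 0) sIn
            + (k / V) * gbar * ∫ u in (0:ℝ)..t, ((ν u) (Set.Icc (0:ℝ) mmax)).toReal := by
  have hc : 0 ≤ k / V := le_of_lt (div_pos hk hV)
  have hM0 : 0 < max (S 0) sIn := lt_max_of_lt_right hsIn
  -- nonnegativity of the substrate integral
  have hI_nonneg : ∀ u (s : ℝ), 0 ≤ s →
      0 ≤ ∫ x in Set.Icc (0:ℝ) mmax, rg s x ∂(ν u) := fun u s hs =>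
    setIntegral_nonneg measurableSet_Icc (fun x hx => hrg_nonneg s hs x hx)
  -- integrability of rg s on X
  have hint : ∀ u (s : ℝ), 0 ≤ s →
      Integrable (rg s) ((ν u).restrict (Set.Icc (0:ℝ) mmax)) := by
    intro u s hs
    haveI := hfin u
    refine Integrable.mono' (integrable_const gbar) (hrg_meas s).aestronglyMeasurable ?_
    filter_upwards [ae_restrict_mem measurableSet_Icc] with x hx
    rw [Real.norm_eq_abs, abs_of_nonneg (hrg_nonneg s hs x hx)]
    exact hrg_le s hs x hx
  -- upper bound on the substrate integral
  have hI_le : ∀ u (s : ℝ), 0 ≤ s →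
      ∫ x in Set.Icc (0:ℝ) mmax, rg s x ∂(ν u)
        ≤ gbar * ((ν u) (Set.Icc (0:ℝ) mmax)).toReal := by
    intro u s hs
    haveI := hfin u
    calc ∫ x in Set.Icc (0:ℝ) mmax, rg s x ∂(ν u)
        ≤ ∫ _x in Set.Icc (0:ℝ) mmax, gbar ∂(ν u) :=
          setIntegral_mono_on (hint u s hs) (integrable_const gbar) measurableSet_Icc
            (fun x hx => hrg_le s hs x hx)
      _ = gbar * ((ν u) (Set.Icc (0:ℝ) mmax)).toReal := by
          rw [setIntegral_const, smul_eq_mul, mul_comm]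
          rfl
  -- difference formula
  have hS_diff : ∀ a b : ℝ, 0 ≤ a → a ≤ b →
      S b = S a + ∫ u in a..b, rhoS mmax D sIn k V rg (S u) (ν u) := by
    intro a b ha hab
    have hb : 0 ≤ b := ha.trans hab
    have hsub : Set.uIcc a b ⊆ Set.uIcc 0 b := by
      rw [Set.uIcc_of_le hab, Set.uIcc_of_le hb]
      exact Set.Icc_subset_Icc ha le_rfl
    have hadd := intervalIntegral.integral_add_adjacent_intervals
      (hS_int a ha) ((hS_int b hb).mono_set hsub)
    have h1 := hS_eq a ha
    have h2 := hS_eq b hb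
    linarith
  -- a.e. fact: u ≠ t₀ on restricted measures
  have hae_ne : ∀ t₀ : ℝ, ∀ᵐ u ∂(volume : Measure ℝ), u ≠ t₀ := by
    intro t₀
    rw [ae_iff]
    have : {a : ℝ | ¬ a ≠ t₀} = {t₀} := by ext x; simp
    rw [this]
    exact Real.volume_singleton
  -- Step 1: S stays nonnegative
  have hS_nonneg : ∀ t, 0 ≤ t → 0 ≤ S t := by
    intro t ht
    by_contra hcon
    push_neg at hcon
    set A := Set.Icc (0:ℝ) t ∩ S ⁻¹' Set.Ici (0:ℝ) with hA
    have hA0 : (0:ℝ) ∈ A := ⟨⟨le_refl 0, ht⟩, hS0⟩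
    have hAbdd : BddAbove A := ⟨t, fun x hx => hx.1.2⟩
    have hAclosed : IsClosed A := isClosed_Icc.inter (isClosed_Ici.preimage hS_cont)
    have ht0A : sSup A ∈ A := hAclosed.csSup_mem ⟨0, hA0⟩ hAbdd
    set t₀ := sSup A with ht₀
    have ht0t : t₀ ≤ t := ht0A.1.2
    have ht00 : 0 ≤ t₀ := ht0A.1.1
    have hSt0 : 0 ≤ S t₀ := ht0A.2
    have hlt : ∀ u, t₀ < u → u ≤ t → S u < 0 := by
      intro u h1 h2
      by_contra h
      push_neg at h
      exact absurd (le_csSup hAbdd ⟨⟨ht00.trans h1.le, h2⟩, h⟩) (not_le.mpr h1)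
    have ht0lt : t₀ < t := by
      rcases lt_or_eq_of_le ht0t with h | h
      · exact h
      · exact absurd (h ▸ hSt0) (not_le.mpr hcon)
    have hf_ge : ∀ u, t₀ < u → u ≤ t →
        D * sIn ≤ rhoS mmax D sIn k V rg (S u) (ν u) := by
      intro u h1 h2
      have hSu : S u < 0 := hlt u h1 h2
      have hI0 : ∫ x in Set.Icc (0:ℝ) mmax, rg (S u) x ∂(ν u) = 0 := by
        have heq : ∀ x, rg (S u) x = rg 0 x := fun x => by
          rw [hrg_ext (S u) x, max_eq_right hSu.le]
        simp only [heq]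
        rw [setIntegral_congr_fun measurableSet_Icc (fun x hx => hrg_zero x hx)]
        simp
      rw [rhoS, hI0, mul_zero, sub_zero]
      nlinarith
    have hint' : IntervalIntegrable (fun u => rhoS mmax D sIn k V rg (S u) (ν u))
        volume t₀ t := by
      refine (hS_int t ht).mono_set ?_
      rw [Set.uIcc_of_le ht0t, Set.uIcc_of_le ht]
      exact Set.Icc_subset_Icc ht00 le_rfl
    have hmono : ∫ _u in t₀..t, (D * sIn)
        ≤ ∫ u in t₀..t, rhoS mmax D sIn k V rg (S u) (ν u) := by
      refine intervalIntegral.integral_mono_ae_restrict ht0t intervalIntegrable_const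
        hint' ?_
      filter_upwards [ae_restrict_mem measurableSet_Icc, ae_restrict_of_ae (hae_ne t₀)]
        with u hu hne
      exact hf_ge u (lt_of_le_of_ne hu.1 (Ne.symm hne)) hu.2
    rw [intervalIntegral.integral_const, smul_eq_mul] at hmono
    have hdiff := hS_diff t₀ t ht00 ht0t
    have hpos : 0 < (t - t₀) * (D * sIn) := mul_pos (sub_pos.mpr ht0lt) (mul_pos hD hsIn)
    linarith
  -- Step 2: S stays below max (S 0) sIn
  have hS_le : ∀ t, 0 ≤ t → S t ≤ max (S 0) sIn := by
    intro t ht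
    by_contra hcon
    push_neg at hcon
    set A := Set.Icc (0:ℝ) t ∩ S ⁻¹' Set.Iic (max (S 0) sIn) with hA
    have hA0 : (0:ℝ) ∈ A := ⟨⟨le_refl 0, ht⟩, le_max_left (S 0) sIn⟩
    have hAbdd : BddAbove A := ⟨t, fun x hx => hx.1.2⟩
    have hAclosed : IsClosed A := isClosed_Icc.inter (isClosed_Iic.preimage hS_cont)
    have ht0A : sSup A ∈ A := hAclosed.csSup_mem ⟨0, hA0⟩ hAbdd
    set t₀ := sSup A with ht₀
    have ht0t : t₀ ≤ t := ht0A.1.2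
    have ht00 : 0 ≤ t₀ := ht0A.1.1
    have hSt0 : S t₀ ≤ max (S 0) sIn := ht0A.2
    have hlt : ∀ u, t₀ < u → u ≤ t → max (S 0) sIn < S u := by
      intro u h1 h2
      by_contra h
      push_neg at h
      exact absurd (le_csSup hAbdd ⟨⟨ht00.trans h1.le, h2⟩, h⟩) (not_le.mpr h1)
    have ht0lt : t₀ < t := by
      rcases lt_or_eq_of_le ht0t with h | h
      · exact h
      · exact absurd (h ▸ hSt0) (not_le.mpr hcon)
    have hf_le : ∀ u, t₀ < u → u ≤ t →
        rhoS mmax D sIn k V rg (S u) (ν u) ≤ 0 := by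
      intro u h1 h2
      have hSu : max (S 0) sIn < S u := hlt u h1 h2
      have hSu0 : 0 ≤ S u := le_of_lt (lt_of_lt_of_le hM0 hSu.le)
      have hI := hI_nonneg u (S u) hSu0
      rw [rhoS]
      have hsin : sIn ≤ max (S 0) sIn := le_max_right _ _
      nlinarith
    have hint' : IntervalIntegrable (fun u => rhoS mmax D sIn k V rg (S u) (ν u))
        volume t₀ t := by
      refine (hS_int t ht).mono_set ?_
      rw [Set.uIcc_of_le ht0t, Set.uIcc_of_le ht]
      exact Set.Icc_subset_Icc ht00 le_rfl
    have hmono : ∫ u in t₀..t, rhoS mmax D sIn k V rg (S u) (ν u)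
        ≤ ∫ _u in t₀..t, (0:ℝ) := by
      refine intervalIntegral.integral_mono_ae_restrict ht0t hint'
        intervalIntegrable_const ?_
      filter_upwards [ae_restrict_mem measurableSet_Icc, ae_restrict_of_ae (hae_ne t₀)]
        with u hu hne
      exact hf_le u (lt_of_le_of_ne hu.1 (Ne.symm hne)) hu.2
    rw [intervalIntegral.integral_const, smul_zero] at hmono
    have hdiff := hS_diff t₀ t ht00 ht0t
    linarith
  -- the pointwise bounds
  have hub : ∀ u, 0 ≤ u → rhoS mmax D sIn k V rg (S u) (ν u) ≤ D * sIn := by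
    intro u hu
    have h0S := hS_nonneg u hu
    have hI := hI_nonneg u (S u) h0S
    rw [rhoS]
    nlinarith
  have hlb : ∀ u, 0 ≤ u →
      - (D * max (S 0) sIn) - (k / V) * gbar * ((ν u) (Set.Icc (0:ℝ) mmax)).toReal
        ≤ rhoS mmax D sIn k V rg (S u) (ν u) := by
    intro u hu
    have h0S := hS_nonneg u hu
    have hSM := hS_le u hu
    have hIle := hI_le u (S u) h0S
    have h2 : (k / V) * (∫ x in Set.Icc (0:ℝ) mmax, rg (S u) x ∂(ν u))
        ≤ (k / V) * (gbar * ((ν u) (Set.Icc (0:ℝ) mmax)).toReal) :=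
      mul_le_mul_of_nonneg_left hIle hc
    have h1 : - (D * max (S 0) sIn) ≤ D * (sIn - S u) := by nlinarith
    rw [rhoS]
    nlinarith
  refine ⟨fun u hu => ⟨hub u hu, hlb u hu⟩, ?_⟩
  -- the integral bound
  intro t ht
  obtain ⟨C, hC⟩ := hlocbdd t
  have hm_nonneg : ∀ u : ℝ, 0 ≤ ((ν u) (Set.Icc (0:ℝ) mmax)).toReal :=
    fun u => ENNReal.toReal_nonneg
  have hC0 : 0 ≤ C := le_trans (hm_nonneg 0) (hC 0 ⟨le_rfl, ht⟩)
  have hm_int : IntervalIntegrable (fun u => ((ν u) (Set.Icc (0:ℝ) mmax)).toReal)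
      volume 0 t := by
    rw [intervalIntegrable_iff_integrableOn_Icc_of_le ht]
    refine Integrable.mono' (integrable_const C) hmass_meas.aestronglyMeasurable ?_
    filter_upwards [ae_restrict_mem measurableSet_Icc] with u hu
    rw [Real.norm_eq_abs, abs_of_nonneg (hm_nonneg u)]
    exact hC u hu
  have hg_int : IntervalIntegrable
      (fun u => D * max (S 0) sIn
        + (k / V) * gbar * ((ν u) (Set.Icc (0:ℝ) mmax)).toReal) volume 0 t :=
    intervalIntegrable_const.add (hm_int.const_mul _)
  have habs : IntervalIntegrable
      (fun u => |rhoS mmax D sIn k V rg (S u) (ν u)|) volume 0 t := (hS_int t ht).abs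
  have hstep : (∫ u in (0:ℝ)..t, |rhoS mmax D sIn k V rg (S u) (ν u)|)
      ≤ ∫ u in (0:ℝ)..t, (D * max (S 0) sIn
          + (k / V) * gbar * ((ν u) (Set.Icc (0:ℝ) mmax)).toReal) := by
    refine intervalIntegral.integral_mono_on ht habs hg_int ?_
    intro u hu
    have hu0 : 0 ≤ u := hu.1
    have h1 := hub u hu0
    have h2 := hlb u hu0
    have h3 : 0 ≤ (k / V) * gbar * ((ν u) (Set.Icc (0:ℝ) mmax)).toReal :=
      mul_nonneg (mul_nonneg hc hgbar.le) (hm_nonneg u)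
    have h4 : D * sIn ≤ D * max (S 0) sIn :=
      mul_le_mul_of_nonneg_left (le_max_right _ _) hD.le
    rw [abs_le]
    constructor <;> linarith
  have hsplit : (∫ u in (0:ℝ)..t, (D * max (S 0) sIn
        + (k / V) * gbar * ((ν u) (Set.Icc (0:ℝ) mmax)).toReal))
      = D * max (S 0) sIn * t
        + (k / V) * gbar * ∫ u in (0:ℝ)..t, ((ν u) (Set.Icc (0:ℝ) mmax)).toReal := by
    rw [intervalIntegral.integral_add intervalIntegrable_const (hm_int.const_mul _),
      intervalIntegral.integral_const, intervalIntegral.integral_const_mul,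
      smul_eq_mul, sub_zero, mul_comm]
  rw [hsplit] at hstep
  calc (∫ u in (0:ℝ)..t, |rhoS mmax D sIn k V rg (S u) (ν u)|)
      ≤ D * max (S 0) sIn * t
        + (k / V) * gbar * ∫ u in (0:ℝ)..t, ((ν u) (Set.Icc (0:ℝ) mmax)).toReal := hstep
    _ = D * t * max (S 0) sIn
        + (k / V) * gbar * ∫ u in (0:ℝ)..t, ((ν u) (Set.Icc (0:ℝ) mmax)).toReal := by
          ring
end
end

section
/- Let μ̃ : [0,∞) → [0,∞) be continuous, and consider the linear growth speed ρ_g(s,x) = μ̃(s)·x. Suppose λ is continuous with 0 ≤ λ ≤ λ̄ and λ(s,x) = 0 for x ≤ m_div for some m_div > 0, and Q(dα) = q(α) dα with q : [0,1] → [0,∞) a continuous probability density with q(α) = q(1−α), extended by 0 outside [0,1]. Let T > 0, S : [0,T] → [0,∞) continuously differentiable, and p : [0,T] × X → [0,∞) continuously differentiable with p_t(0) = 0 and p_t(m_max) = 0 for all t ∈ [0,T], solving: dS_t/dt = D(s_in − S_t) − (k/V)∫_X μ̃(S_t)·x·p_t(x) dx, and ∂_t p_t(x) + ∂_x(μ̃(S_t)·x·p_t(x))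 + (λ(S_t, x) + D) p_t(x) = 2∫_X (λ(S_t, z)/z) q(x/z) p_t(z) dz on [0,T] × X. Define the biomass concentration Y_t = (1/V)∫_X x·p_t(x) dx. Then (Y, S) satisfies the classical chemostat ordinary differential equations: dY_t/dt = (μ̃(S_t) − D)·Y_t and dS_t/dt = D(s_in − S_t) − k·μ̃(S_t)·Y_t for all t ∈ [0,T]. -/
open MeasureTheory Filter

noncomputable section


lemma exists_slope_eq {T : ℝ} (g g' : ℝ → ℝ)
    (hg : ∀ u ∈ Set.Icc (0:ℝ) T, HasDerivWithinAt g (g' u) (Set.Icc 0 T) u)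
    {t τ : ℝ} (ht : t ∈ Set.Icc (0:ℝ) T) (hτ : τ ∈ Set.Icc (0:ℝ) T) (hne : τ ≠ t) :
    ∃ c ∈ Set.Icc (0:ℝ) T, |c - t| ≤ |τ - t| ∧ (g τ - g t) / (τ - t) = g' c := by
  have hcont : ContinuousOn g (Set.Icc 0 T) := fun u hu => (hg u hu).continuousWithinAt
  have key : ∀ u v : ℝ, u ∈ Set.Icc (0:ℝ) T → v ∈ Set.Icc (0:ℝ) T → u < v →
      ∃ c ∈ Set.Ioo u v, g' c = (g v - g u) / (v - u) := by
    intro u v hu hv huv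
    refine exists_hasDerivAt_eq_slope g g' huv (hcont.mono (Set.Icc_subset_Icc hu.1 hv.2)) ?_
    intro x hx
    have hxI : x ∈ Set.Icc (0:ℝ) T := ⟨le_trans hu.1 hx.1.le, le_trans hx.2.le hv.2⟩
    exact (hg x hxI).hasDerivAt (Icc_mem_nhds (lt_of_le_of_lt hu.1 hx.1) (lt_of_lt_of_le hx.2 hv.2))
  rcases hne.lt_or_gt with h | h
  · obtain ⟨c, hc, hceq⟩ := key τ t hτ ht h
    refine ⟨c, ⟨le_trans hτ.1 hc.1.le, le_trans hc.2.le ht.2⟩, ?_, ?_⟩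
    · rw [abs_of_nonpos (by linarith [hc.2]), abs_of_nonpos (by linarith)]
      linarith [hc.1]
    · rw [hceq, show (g t - g τ)/(t - τ) = (g τ - g t)/(τ - t) by
        rw [← neg_div_neg_eq, neg_sub, neg_sub]]
  · obtain ⟨c, hc, hceq⟩ := key t τ ht hτ h
    refine ⟨c, ⟨le_trans ht.1 hc.1.le, le_trans hc.2.le hτ.2⟩, ?_, hceq.symm⟩
    rw [abs_of_nonneg (by linarith [hc.1]), abs_of_nonneg (by linarith)]
    linarith [hc.2]

lemma hasDerivWithinAt_integral_param
    {T a b : ℝ} (hab : a ≤ b)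
    (f f' : ℝ → ℝ → ℝ)
    (hcont : ContinuousOn (fun p : ℝ × ℝ => f p.1 p.2) (Set.Icc 0 T ×ˢ Set.Icc a b))
    (hder : ∀ t ∈ Set.Icc (0:ℝ) T, ∀ x ∈ Set.Icc a b,
      HasDerivWithinAt (fun τ => f τ x) (f' t x) (Set.Icc 0 T) t)
    (hcont' : ContinuousOn (fun p : ℝ × ℝ => f' p.1 p.2) (Set.Icc 0 T ×ˢ Set.Icc a b))
    {t : ℝ} (ht : t ∈ Set.Icc (0:ℝ) T) :
    HasDerivWithinAt (fun τ => ∫ x in Set.Icc a b, f τ x)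
      (∫ x in Set.Icc a b, f' t x) (Set.Icc 0 T) t := by
  have hslice : ∀ τ ∈ Set.Icc (0:ℝ) T, ContinuousOn (fun x => f τ x) (Set.Icc a b) := by
    intro τ hτ
    exact hcont.comp (Continuous.continuousOn (by fun_prop)) (fun x hx => Set.mk_mem_prod hτ hx)
  have hslice' : ∀ τ ∈ Set.Icc (0:ℝ) T, ContinuousOn (fun x => f' τ x) (Set.Icc a b) := by
    intro τ hτ
    exact hcont'.comp (Continuous.continuousOn (by fun_prop)) (fun x hx => Set.mk_mem_prod hτ hx)
  have hint : ∀ τ ∈ Set.Icc (0:ℝ) T, IntegrableOn (fun x => f τ x) (Set.Icc a b) :=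
    fun τ hτ => (hslice τ hτ).integrableOn_Icc
  rw [hasDerivWithinAt_iff_tendsto_slope]
  rw [Metric.tendsto_nhdsWithin_nhds]
  intro ε hε
  set ε' : ℝ := ε / (2 * (b - a + 1)) with hε'def
  have hba : (0:ℝ) < 2 * (b - a + 1) := by linarith
  have hε' : 0 < ε' := div_pos hε hba
  have hK : IsCompact (Set.Icc (0:ℝ) T ×ˢ Set.Icc a b) := isCompact_Icc.prod isCompact_Icc
  have huc := hK.uniformContinuousOn_of_continuous hcont'
  rw [Metric.uniformContinuousOn_iff] at huc
  obtain ⟨δ, hδpos, hδ⟩ := huc ε' hε'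
  refine ⟨δ, hδpos, ?_⟩
  intro τ hτ hdist
  have hτI : τ ∈ Set.Icc (0:ℝ) T := hτ.1
  have hτne : τ ≠ t := fun hh => hτ.2 (by simp [hh])
  rw [Real.dist_eq] at hdist
  -- rewrite slope as an integral
  have hsub : τ - t ≠ 0 := sub_ne_zero.mpr hτne
  have hslope : slope (fun τ => ∫ x in Set.Icc a b, f τ x) t τ
      = ∫ x in Set.Icc a b, (f τ x - f t x) / (τ - t) := by
    rw [slope_def_field, ← integral_sub (hint τ hτI) (hint t ht), ← integral_div]
  rw [hslope, Real.dist_eq, ← integral_sub]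
  · have hbound : ∀ x ∈ Set.Icc a b,
        ‖(f τ x - f t x) / (τ - t) - f' t x‖ ≤ ε' := by
      intro x hx
      obtain ⟨c, hcI, hcle, hceq⟩ := exists_slope_eq (fun τ => f τ x) (fun u => f' u x)
        (fun u hu => hder u hu x hx) ht hτI hτne
      rw [hceq]
      have := hδ (c, x) (Set.mk_mem_prod hcI hx) (t, x) (Set.mk_mem_prod ht hx)
        (by rw [Prod.dist_eq]; simp [Real.dist_eq]
            exact lt_of_le_of_lt hcle hdist)
      rw [Real.dist_eq] at this
      exact this.le
    have hmeas : AEStronglyMeasurable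
        (fun x => (f τ x - f t x) / (τ - t) - f' t x) (volume.restrict (Set.Icc a b)) := by
      have h1 := ((hslice τ hτI).sub (hslice t ht)).div_const (τ - t)
      exact (h1.sub (hslice' t ht)).aestronglyMeasurable measurableSet_Icc
    have hfin : volume (Set.Icc a b) < ⊤ := by simp
    have := norm_setIntegral_le_of_norm_le_const hfin hbound
    calc |∫ x in Set.Icc a b, ((f τ x - f t x) / (τ - t) - f' t x)|
        ≤ ε' * (volume (Set.Icc a b)).toReal := this
      _ ≤ ε' * (b - a) := by
          rw [Real.volume_Icc, ENNReal.toReal_ofReal (by linarith)]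
      _ < ε := by
          rw [hε'def]
          rw [div_mul_eq_mul_div, div_lt_iff₀ hba]
          nlinarith
  · exact (((hslice τ hτI).sub (hslice t ht)).div_const (τ - t)).integrableOn_Icc
  · exact (hslice' t ht).integrableOn_Icc


lemma qmoment (q : ℝ → ℝ)
    (hq_cont : ContinuousOn q (Set.Icc (0:ℝ) 1))
    (hq_prob : (∫ α in (0:ℝ)..1, q α) = 1)
    (hq_symm : ∀ α ∈ Set.Icc (0:ℝ) 1, q α = q (1 - α)) :
    (∫ u in (0:ℝ)..1, u * q u) = 1/2 := by
  have huIcc : Set.uIcc (0:ℝ) 1 = Set.Icc 0 1 := Set.uIcc_of_le zero_le_one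
  have hqi : IntervalIntegrable q volume 0 1 := by
    apply ContinuousOn.intervalIntegrable; rw [huIcc]; exact hq_cont
  have hfi : IntervalIntegrable (fun u => u * q u) volume 0 1 := by
    apply ContinuousOn.intervalIntegrable; rw [huIcc]
    exact continuousOn_id.mul hq_cont
  have h1 : (∫ u in (0:ℝ)..1, (1 - u) * q (1 - u)) = ∫ u in (0:ℝ)..1, u * q u := by
    have := intervalIntegral.integral_comp_sub_left (a := 0) (b := 1) (fun x => x * q x) 1
    simpa using this
  have h2 : (∫ u in (0:ℝ)..1, (1 - u) * q (1 - u)) = ∫ u in (0:ℝ)..1, (1 - u) * q u := by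
    apply intervalIntegral.integral_congr
    intro u hu
    rw [huIcc] at hu
    simp only []
    rw [← hq_symm u hu]
  have h3 : (∫ u in (0:ℝ)..1, (1 - u) * q u) = (∫ u in (0:ℝ)..1, q u) - ∫ u in (0:ℝ)..1, u * q u := by
    rw [← intervalIntegral.integral_sub hqi hfi]
    apply intervalIntegral.integral_congr
    intro u _; ring
  rw [h2, h3, hq_prob] at h1
  linarith

lemma Jz (mmax : ℝ) (q : ℝ → ℝ)
    (hq_cont : ContinuousOn q (Set.Icc (0:ℝ) 1))
    (hq_prob : (∫ α in (0:ℝ)..1, q α) = 1)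
    (hq_symm : ∀ α ∈ Set.Icc (0:ℝ) 1, q α = q (1 - α))
    (hq_zero : ∀ α, α ∉ Set.Icc (0:ℝ) 1 → q α = 0)
    {z : ℝ} (hz : 0 < z) (hzm : z ≤ mmax) :
    (∫ x in Set.Icc (0:ℝ) mmax, x * q (x / z)) = z ^ 2 / 2 := by
  have h0m : (0:ℝ) ≤ mmax := le_trans hz.le hzm
  rw [MeasureTheory.integral_Icc_eq_integral_Ioc, ← intervalIntegral.integral_of_le h0m]
  have hi1 : IntervalIntegrable (fun x => x * q (x / z)) volume 0 z := by
    apply ContinuousOn.intervalIntegrable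
    rw [Set.uIcc_of_le hz.le]
    apply continuousOn_id.mul
    apply hq_cont.comp (continuousOn_id.div_const z)
    intro x hx
    exact ⟨div_nonneg hx.1 hz.le, (div_le_one hz).mpr hx.2⟩
  have hzero : ∀ x ∈ Set.Ioc z mmax, x * q (x / z) = 0 := by
    intro x hx
    have : q (x / z) = 0 := by
      apply hq_zero
      intro hmem
      have : x / z ≤ 1 := hmem.2
      have : x ≤ z := (div_le_one hz).mp this
      linarith [hx.1]
    rw [this, mul_zero]
  have hi2 : IntervalIntegrable (fun x => x * q (x / z)) volume z mmax := by
    rw [intervalIntegrable_iff_integrableOn_Ioc_of_le hzm]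
    exact (integrableOn_zero).congr_fun (fun x hx => (hzero x hx).symm) measurableSet_Ioc
  rw [← intervalIntegral.integral_add_adjacent_intervals hi1 hi2]
  have h2 : (∫ x in z..mmax, x * q (x / z)) = 0 := by
    rw [intervalIntegral.integral_of_le hzm,
      MeasureTheory.setIntegral_congr_fun measurableSet_Ioc hzero]
    simp
  have h1 : (∫ x in (0:ℝ)..z, x * q (x / z)) = z ^ 2 / 2 := by
    have hcongr : (∫ x in (0:ℝ)..z, x * q (x / z))
        = ∫ x in (0:ℝ)..z, z * ((fun y => y * q y) (x / z)) := by
      apply intervalIntegral.integral_congr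
      intro x _
      field_simp
    rw [hcongr, intervalIntegral.integral_const_mul,
      intervalIntegral.integral_comp_div (fun y => y * q y) hz.ne',
      zero_div, div_self hz.ne', qmoment q hq_cont hq_prob hq_symm]
    simp [smul_eq_mul]; ring
  rw [h1, h2]; ring


section
variable (mmax mdiv lamBar : ℝ)

lemma diag_null : (volume : Measure (ℝ × ℝ)) {w : ℝ × ℝ | w.1 = w.2} = 0 := by
  have : {w : ℝ × ℝ | w.1 = w.2}
      = (LinearMap.ker ((LinearMap.fst ℝ ℝ ℝ) - (LinearMap.snd ℝ ℝ ℝ)) : Set (ℝ × ℝ)) := by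
    ext w
    simp [LinearMap.mem_ker, sub_eq_zero]
  rw [this]
  apply Measure.addHaar_submodule
  intro h
  have : ((1:ℝ), (0:ℝ)) ∈ LinearMap.ker ((LinearMap.fst ℝ ℝ ℝ) - (LinearMap.snd ℝ ℝ ℝ)) := by
    rw [h]; trivial
  simp [LinearMap.mem_ker] at this

lemma fst_null : (volume : Measure (ℝ × ℝ)) {w : ℝ × ℝ | w.1 = 0} = 0 := by
  have : {w : ℝ × ℝ | w.1 = 0} = ({0} : Set ℝ) ×ˢ (Set.univ : Set ℝ) := by
    ext w
    simp [Set.mem_prod]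

  rw [this, Measure.volume_eq_prod, Measure.prod_prod]
  simp

lemma snd_null : (volume : Measure (ℝ × ℝ)) {w : ℝ × ℝ | w.2 = 0} = 0 := by
  have : {w : ℝ × ℝ | w.2 = 0} = (Set.univ : Set ℝ) ×ˢ ({0} : Set ℝ) := by
    ext w
    simp [Set.mem_prod]

  rw [this, Measure.volume_eq_prod, Measure.prod_prod]
  simp
end

lemma parts_lemma (mmax : ℝ) (hmmax : 0 < mmax) (P Px : ℝ → ℝ)
    (hP_cont : ContinuousOn P (Set.Icc 0 mmax))
    (hPx_cont : ContinuousOn Px (Set.Icc 0 mmax))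
    (hPx : ∀ x ∈ Set.Icc (0:ℝ) mmax, HasDerivWithinAt P (Px x) (Set.Icc 0 mmax) x)
    (hP0 : P 0 = 0) (hPm : P mmax = 0) :
    (∫ x in Set.Icc (0:ℝ) mmax, x ^ 2 * Px x)
      = -2 * ∫ x in Set.Icc (0:ℝ) mmax, x * P x := by
  have huIcc : Set.uIcc (0:ℝ) mmax = Set.Icc 0 mmax := Set.uIcc_of_le hmmax.le
  have key : (∫ x in (0:ℝ)..mmax, (2 * x * P x + x ^ 2 * Px x))
      = mmax ^ 2 * P mmax - 0 ^ 2 * P 0 := by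
    apply intervalIntegral.integral_eq_sub_of_hasDeriv_right_of_le hmmax.le
    · exact (continuousOn_id.pow 2).mul hP_cont
    · intro x hx
      have h1 : HasDerivAt (fun y : ℝ => y ^ 2) (2 * x) x := by
        simpa using hasDerivAt_pow 2 x
      have h2 : HasDerivAt P (Px x) x :=
        (hPx x ⟨hx.1.le, hx.2.le⟩).hasDerivAt (Icc_mem_nhds hx.1 hx.2)
      exact ((h1.mul h2).hasDerivWithinAt)
    · apply ContinuousOn.intervalIntegrable
      rw [huIcc]
      exact ((continuous_const.mul continuous_id).continuousOn.mul hP_cont).add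
        ((continuousOn_id.pow 2).mul hPx_cont)
  rw [hP0, hPm] at key
  have key' : (∫ x in Set.Icc (0:ℝ) mmax, (2 * x * P x + x ^ 2 * Px x)) = 0 := by
    rw [MeasureTheory.integral_Icc_eq_integral_Ioc, ← intervalIntegral.integral_of_le hmmax.le,
      key]
    ring
  have hsplit : (∫ x in Set.Icc (0:ℝ) mmax, (2 * x * P x + x ^ 2 * Px x))
      = (∫ x in Set.Icc (0:ℝ) mmax, 2 * (x * P x)) + ∫ x in Set.Icc (0:ℝ) mmax, x ^ 2 * Px x := by
    rw [← integral_add]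
    · exact integral_congr_ae (ae_of_all _ (fun x => by ring))
    · exact (continuousOn_const.mul (continuousOn_id.mul hP_cont)).integrableOn_Icc
    · exact ((continuousOn_id.pow 2).mul hPx_cont).integrableOn_Icc
  rw [integral_const_mul] at hsplit
  rw [hsplit] at key'
  linarith

lemma fubini_frag (mmax mdiv lamBar : ℝ)
    (hmmax : 0 < mmax) (hmdiv : 0 < mdiv) (hlamBar : 0 < lamBar)
    (lam1 : ℝ → ℝ) (hlam1_cont : ContinuousOn lam1 (Set.Icc 0 mmax))
    (hlam1_zero : ∀ x : ℝ, x ≤ mdiv → lam1 x = 0)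
    (hlam1_le : ∀ x ∈ Set.Icc (0:ℝ) mmax, |lam1 x| ≤ lamBar)
    (q : ℝ → ℝ)
    (hq_cont : ContinuousOn q (Set.Icc (0:ℝ) 1))
    (hq_zero : ∀ α, α ∉ Set.Icc (0:ℝ) 1 → q α = 0)
    (hq_prob : (∫ α in (0:ℝ)..1, q α) = 1)
    (hq_symm : ∀ α ∈ Set.Icc (0:ℝ) 1, q α = q (1 - α))
    (P : ℝ → ℝ) (hP_cont : ContinuousOn P (Set.Icc 0 mmax)) :
    (∫ x in Set.Icc (0:ℝ) mmax,
        x * (2 * ∫ z in Set.Icc (0:ℝ) mmax, (lam1 z / z) * q (x / z) * P z))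
      = ∫ z in Set.Icc (0:ℝ) mmax, lam1 z * z * P z := by
  set I : Set ℝ := Set.Icc (0:ℝ) mmax with hI
  set f : ℝ → ℝ → ℝ := fun x z => (2 * x) * ((lam1 z / z) * q (x / z) * P z) with hf
  set Box : Set (ℝ × ℝ) := I ×ˢ I with hBoxdef
  have hBox : (volume.restrict I).prod (volume.restrict I)
      = (volume : Measure (ℝ × ℝ)).restrict Box := by
    rw [Measure.prod_restrict, ← Measure.volume_eq_prod]
  -- continuity of z ↦ lam1 z / z on I
  have hlamdiv : ContinuousOn (fun z => lam1 z / z) I := by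
    intro z hz
    by_cases hz0 : z < mdiv
    · have hev : (fun u => lam1 u / u) =ᶠ[nhdsWithin z I] (fun _ => (0:ℝ)) := by
        have hmem : Set.Iio mdiv ∈ nhdsWithin z I :=
          mem_nhdsWithin_of_mem_nhds (Iio_mem_nhds hz0)
        filter_upwards [hmem] with u hu
        rw [hlam1_zero u (le_of_lt hu), zero_div]
      exact (continuousWithinAt_const (b := (0:ℝ))).congr_of_eventuallyEq hev
        (by rw [hlam1_zero z (le_of_lt hz0), zero_div])
    · push_neg at hz0
      have hzne : z ≠ 0 := by intro h; rw [h] at hz0; linarith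
      exact ((hlam1_cont z hz).div continuousWithinAt_id hzne)
  -- continuity of q at points away from 0, 1
  have hq_at : ∀ y : ℝ, y ≠ 0 → y ≠ 1 → ContinuousAt q y := by
    intro y hy0 hy1
    rcases lt_trichotomy y 0 with h | h | h
    · have hev : (fun _ => (0:ℝ)) =ᶠ[nhds y] q := by
        filter_upwards [Iio_mem_nhds h] with u hu
        rw [hq_zero u (by simp [Set.mem_Icc]; intro h'; linarith [Set.mem_Iio.mp hu])]
      exact continuousAt_const.congr hev
    · exact absurd h hy0
    · rcases lt_trichotomy y 1 with h1 | h1 | h1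
      · exact hq_cont.continuousAt (Icc_mem_nhds h h1)
      · exact absurd h1 hy1
      · have hev : (fun _ => (0:ℝ)) =ᶠ[nhds y] q := by
          filter_upwards [Ioi_mem_nhds h1] with u hu
          rw [hq_zero u (by simp [Set.mem_Icc]; intro h'; linarith [Set.mem_Ioi.mp hu])]
        exact continuousAt_const.congr hev
  -- the open set where everything is continuous
  set U : Set (ℝ × ℝ) := {w | w.1 ≠ 0 ∧ w.2 ≠ 0 ∧ w.1 ≠ w.2} with hU
  have hU_open : IsOpen U := by
    have h1 : IsOpen {w : ℝ × ℝ | w.1 ≠ 0} :=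
      isOpen_ne_fun continuous_fst continuous_const
    have h2 : IsOpen {w : ℝ × ℝ | w.2 ≠ 0} :=
      isOpen_ne_fun continuous_snd continuous_const
    have h3 : IsOpen {w : ℝ × ℝ | w.1 ≠ w.2} :=
      isOpen_ne_fun continuous_fst continuous_snd
    exact h1.inter (h2.inter h3)
  -- continuity of the integrand on Box ∩ U
  have hFcont : ContinuousOn (Function.uncurry f) (Box ∩ U) := by
    have hc1 : ContinuousOn (fun w : ℝ × ℝ => 2 * w.1) (Box ∩ U) :=
      (continuous_const.mul continuous_fst).continuousOn
    have hc2 : ContinuousOn (fun w : ℝ × ℝ => lam1 w.2 / w.2) (Box ∩ U) :=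
      hlamdiv.comp continuous_snd.continuousOn (fun w hw => hw.1.2)
    have hc3 : ContinuousOn (fun w : ℝ × ℝ => q (w.1 / w.2)) (Box ∩ U) := by
      intro w hw
      have hw2 : w.2 ≠ 0 := hw.2.2.1
      apply ContinuousAt.continuousWithinAt
      have hdiv : ContinuousAt (fun w : ℝ × ℝ => w.1 / w.2) w :=
        continuousAt_fst.div continuousAt_snd hw2
      exact ContinuousAt.comp (g := q) (f := fun w : ℝ × ℝ => w.1 / w.2)
        (hq_at _ (div_ne_zero hw.2.1 hw2)
          (fun h => hw.2.2.2 ((div_eq_one_iff_eq hw2).mp h))) hdiv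
    have hc4 : ContinuousOn (fun w : ℝ × ℝ => P w.2) (Box ∩ U) :=
      hP_cont.comp continuous_snd.continuousOn (fun w hw => hw.1.2)
    exact hc1.mul ((hc2.mul hc3).mul hc4)
  have hmeasBU : MeasurableSet (Box ∩ U) :=
    (measurableSet_Icc.prod measurableSet_Icc).inter hU_open.measurableSet
  have hBoxMeas : MeasurableSet Box := measurableSet_Icc.prod measurableSet_Icc
  -- Box and Box ∩ U agree a.e.
  have hUc_null : (volume : Measure (ℝ × ℝ))
      ({w : ℝ × ℝ | w.1 = 0} ∪ ({w : ℝ × ℝ | w.2 = 0} ∪ {w : ℝ × ℝ | w.1 = w.2})) = 0 :=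
    measure_union_null fst_null (measure_union_null snd_null diag_null)
  have hae : (Box : Set (ℝ × ℝ)) =ᵐ[(volume : Measure (ℝ × ℝ))] ((Box ∩ U : Set (ℝ × ℝ))) := by
    rw [MeasureTheory.ae_eq_set]
    refine ⟨measure_mono_null ?_ hUc_null, ?_⟩
    · intro w hw
      have hnU : w ∉ U := fun hU' => hw.2 ⟨hw.1, hU'⟩
      simp only [hU, Set.mem_setOf_eq, not_and_or, not_not] at hnU
      simp only [Set.mem_union, Set.mem_setOf_eq]
      tauto
    · have he : (Box ∩ U) \ Box = ∅ := Set.diff_eq_empty.mpr Set.inter_subset_left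
      rw [he]
      simp
  have hF_aesm : AEStronglyMeasurable (Function.uncurry f)
      ((volume.restrict I).prod (volume.restrict I)) := by
    rw [hBox, Measure.restrict_congr_set hae]
    exact hFcont.aestronglyMeasurable hmeasBU
  -- boundedness
  obtain ⟨Cq, hCq⟩ := isCompact_Icc.exists_bound_of_continuousOn hq_cont
  obtain ⟨Cp, hCp⟩ := isCompact_Icc.exists_bound_of_continuousOn hP_cont
  set C : ℝ := 2 * mmax * (lamBar / mdiv * max Cq 0 * max Cp 0) with hC
  have hqb : ∀ y : ℝ, |q y| ≤ max Cq 0 := by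
    intro y
    by_cases h : y ∈ Set.Icc (0:ℝ) 1
    · have := hCq y h
      rw [Real.norm_eq_abs] at this
      exact le_trans this (le_max_left _ _)
    · rw [hq_zero y h, abs_zero]
      exact le_max_right _ _
  have hld : ∀ z ∈ I, |lam1 z / z| ≤ lamBar / mdiv := by
    intro z hz
    by_cases h : z ≤ mdiv
    · rw [hlam1_zero z h, zero_div, abs_zero]
      positivity
    · push_neg at h
      rw [abs_div, abs_of_nonneg (le_trans hmdiv.le h.le)]
      exact div_le_div₀ hlamBar.le (hlam1_le z hz) hmdiv h.le
  have hbound : ∀ w ∈ Box, ‖Function.uncurry f w‖ ≤ C := by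
    rintro ⟨x, z⟩ ⟨hx, hz⟩
    have hx0 : (0:ℝ) ≤ x := hx.1
    show ‖f x z‖ ≤ C
    rw [hf, Real.norm_eq_abs]
    have b1 : |2 * x| ≤ 2 * mmax := by
      rw [abs_of_nonneg (by linarith)]
      linarith [hx.2]
    have b2 := hld z hz
    have b3 := hqb (x / z)
    have b4 : |P z| ≤ max Cp 0 := by
      have := hCp z hz
      rw [Real.norm_eq_abs] at this
      exact le_trans this (le_max_left _ _)
    calc |2 * x * (lam1 z / z * q (x / z) * P z)|
        = |2 * x| * (|lam1 z / z| * |q (x / z)| * |P z|) := by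
          simp only [abs_mul]
      _ ≤ 2 * mmax * (lamBar / mdiv * max Cq 0 * max Cp 0) := by
          have h1 := mul_le_mul b2 b3 (abs_nonneg _) (by positivity)
          have h2 := mul_le_mul h1 b4 (abs_nonneg _) (by positivity)
          exact mul_le_mul b1 h2 (by positivity) (by linarith)
  have hFint : Integrable (Function.uncurry f)
      ((volume.restrict I).prod (volume.restrict I)) := by
    refine Integrable.mono' (g := fun _ => C) ?_ hF_aesm ?_
    · rw [hBox]
      exact integrableOn_const ((isCompact_Icc.prod isCompact_Icc).measure_lt_top.ne)
    · rw [hBox]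
      exact (ae_restrict_iff' hBoxMeas).mpr (ae_of_all _ hbound)
  have hswap := MeasureTheory.integral_integral_swap
    (μ := volume.restrict I) (ν := volume.restrict I) (f := f) hFint
  have hLHS : (∫ x in I, x * (2 * ∫ z in I, (lam1 z / z) * q (x / z) * P z))
      = ∫ x in I, ∫ z in I, f x z := by
    refine integral_congr_ae (ae_of_all _ (fun x => ?_))
    simp only [hf]
    rw [integral_const_mul]
    ring
  have hRHS : (∫ z in I, ∫ x in I, f x z) = ∫ z in I, lam1 z * z * P z := by
    apply setIntegral_congr_ae measurableSet_Icc
    have h0 : ∀ᵐ z : ℝ, z ≠ (0:ℝ) := by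
      rw [ae_iff]
      have : {a : ℝ | ¬ a ≠ 0} = {0} := by ext a; simp
      rw [this]
      simp
    filter_upwards [h0] with z hz hzI
    have hzpos : 0 < z := lt_of_le_of_ne hzI.1 (Ne.symm hz)
    have hpull : (∫ x in I, f x z) = (2 * (lam1 z / z) * P z) * ∫ x in I, x * q (x / z) := by
      rw [← integral_const_mul]
      refine integral_congr_ae (ae_of_all _ (fun x => ?_))
      simp only [hf]
      ring
    rw [hpull, hI, Jz mmax q hq_cont hq_prob hq_symm hq_zero hzpos hzI.2]
    field_simp
  exact hLHS.trans (hswap.trans hRHS)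



/-- For the linear growth speed `ρ_g(s,x) = μ̃(s) x`, a (smooth,
nonnegative) solution `(S, p)` of the strong population-balance chemostat system with
`p_t(0) = p_t(m_max) = 0` yields, for the biomass concentration
`Y_t = (1/V) ∫_X x p_t(x) dx`, the classical chemostat ordinary differential equations
`dY_t/dt = (μ̃(S_t) − D) Y_t` and `dS_t/dt = D (s_in − S_t) − k μ̃(S_t) Y_t` on `[0,T]`. -/
theorem population_balance_to_classical_chemostat
    (mmax D sIn k V lamBar mdiv : ℝ)
    (hmmax : 0 < mmax) (hD : 0 < D) (hsIn : 0 < sIn) (hk : 0 < k) (hV : 0 < V)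
    (hlamBar : 0 < lamBar) (hmdiv : 0 < mdiv)
    (mu : ℝ → ℝ) (hmu_cont : Continuous mu) (hmu_nonneg : ∀ s, 0 ≤ s → 0 ≤ mu s)
    (lam : ℝ → ℝ → ℝ)
    (hlam_nonneg : ∀ s, 0 ≤ s → ∀ x ∈ Set.Icc (0:ℝ) mmax, 0 ≤ lam s x)
    (hlam_le : ∀ s, 0 ≤ s → ∀ x ∈ Set.Icc (0:ℝ) mmax, lam s x ≤ lamBar)
    (hlam_cont : ContinuousOn (fun sx : ℝ × ℝ => lam sx.1 sx.2)
      (Set.Ici 0 ×ˢ Set.Icc 0 mmax))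
    (hlam_zero : ∀ s, 0 ≤ s → ∀ x : ℝ, x ≤ mdiv → lam s x = 0)
    -- `q` is a continuous symmetric probability density on `[0,1]`, extended by `0` outside
    (q : ℝ → ℝ)
    (hq_cont : ContinuousOn q (Set.Icc (0:ℝ) 1))
    (hq_nonneg : ∀ α ∈ Set.Icc (0:ℝ) 1, 0 ≤ q α)
    (hq_zero : ∀ α, α ∉ Set.Icc (0:ℝ) 1 → q α = 0)
    (hq_prob : (∫ α in (0:ℝ)..1, q α) = 1)
    (hq_symm : ∀ α ∈ Set.Icc (0:ℝ) 1, q α = q (1 - α))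
    (T : ℝ) (hT : 0 < T)
    (S : ℝ → ℝ) (hS_nonneg : ∀ t ∈ Set.Icc (0:ℝ) T, 0 ≤ S t)
    (p pt px : ℝ → ℝ → ℝ)
    (hp_nonneg : ∀ t ∈ Set.Icc (0:ℝ) T, ∀ x ∈ Set.Icc (0:ℝ) mmax, 0 ≤ p t x)
    (hp_zero : ∀ t ∈ Set.Icc (0:ℝ) T, p t 0 = 0)
    (hp_mmax : ∀ t ∈ Set.Icc (0:ℝ) T, p t mmax = 0)
    (hp_cont : ContinuousOn (fun tx : ℝ × ℝ => p tx.1 tx.2)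
      (Set.Icc 0 T ×ˢ Set.Icc 0 mmax))
    (hpt : ∀ t ∈ Set.Icc (0:ℝ) T, ∀ x ∈ Set.Icc (0:ℝ) mmax,
      HasDerivWithinAt (fun τ => p τ x) (pt t x) (Set.Icc 0 T) t)
    (hpx : ∀ t ∈ Set.Icc (0:ℝ) T, ∀ x ∈ Set.Icc (0:ℝ) mmax,
      HasDerivWithinAt (fun y => p t y) (px t x) (Set.Icc 0 mmax) x)
    (hpt_cont : ContinuousOn (fun tx : ℝ × ℝ => pt tx.1 tx.2)
      (Set.Icc 0 T ×ˢ Set.Icc 0 mmax))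
    (hpx_cont : ContinuousOn (fun tx : ℝ × ℝ => px tx.1 tx.2)
      (Set.Icc 0 T ×ˢ Set.Icc 0 mmax))
    -- substrate equation, with `ρ_g(s,x) = μ̃(s) x`
    (hS_ode : ∀ t ∈ Set.Icc (0:ℝ) T,
      HasDerivWithinAt S
        (D * (sIn - S t) - (k / V) * ∫ x in Set.Icc (0:ℝ) mmax, mu (S t) * x * p t x)
        (Set.Icc 0 T) t)
    -- population-balance equation, with `∂_x(μ̃(S_t) x p_t(x)) = μ̃(S_t) (p + x ∂_x p)`
    (hpde : ∀ t ∈ Set.Icc (0:ℝ) T, ∀ x ∈ Set.Icc (0:ℝ) mmax,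
      pt t x + (mu (S t) * p t x + mu (S t) * x * px t x) + (lam (S t) x + D) * p t x
        = 2 * ∫ z in Set.Icc (0:ℝ) mmax, (lam (S t) z / z) * q (x / z) * p t z) :
    ∀ t ∈ Set.Icc (0:ℝ) T,
      HasDerivWithinAt (fun τ => (1 / V) * ∫ x in Set.Icc (0:ℝ) mmax, x * p τ x)
        ((mu (S t) - D) * ((1 / V) * ∫ x in Set.Icc (0:ℝ) mmax, x * p t x))
        (Set.Icc 0 T) t
      ∧ HasDerivWithinAt S
          (D * (sIn - S t)
            - k * mu (S t) * ((1 / V) * ∫ x in Set.Icc (0:ℝ) mmax, x * p t x))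
          (Set.Icc 0 T) t := by
  intro t ht
  have hS0 : 0 ≤ S t := hS_nonneg t ht
  -- slices at time t
  have hp_slice : ContinuousOn (fun x => p t x) (Set.Icc 0 mmax) :=
    hp_cont.comp (Continuous.continuousOn (by fun_prop)) (fun x hx => Set.mk_mem_prod ht hx)
  have hpt_slice : ContinuousOn (fun x => pt t x) (Set.Icc 0 mmax) :=
    hpt_cont.comp (Continuous.continuousOn (by fun_prop)) (fun x hx => Set.mk_mem_prod ht hx)
  have hpx_slice : ContinuousOn (fun x => px t x) (Set.Icc 0 mmax) :=
    hpx_cont.comp (Continuous.continuousOn (by fun_prop)) (fun x hx => Set.mk_mem_prod ht hx)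
  have hlam1_cont : ContinuousOn (fun z => lam (S t) z) (Set.Icc 0 mmax) :=
    hlam_cont.comp (Continuous.continuousOn (by fun_prop))
      (fun x hx => Set.mk_mem_prod (Set.mem_Ici.mpr hS0) hx)
  have hlam1_le : ∀ x ∈ Set.Icc (0:ℝ) mmax, |lam (S t) x| ≤ lamBar := fun x hx => by
    rw [abs_of_nonneg (hlam_nonneg _ hS0 x hx)]
    exact hlam_le _ hS0 x hx
  -- integration by parts
  have hB := parts_lemma mmax hmmax (p t) (px t) hp_slice hpx_slice
    (fun x hx => hpx t ht x hx) (hp_zero t ht) (hp_mmax t ht)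
  -- Fubini for the fragmentation term
  have hFr := fubini_frag mmax mdiv lamBar hmmax hmdiv hlamBar (fun z => lam (S t) z)
    hlam1_cont (fun x hx => hlam_zero (S t) hS0 x hx) hlam1_le q hq_cont hq_zero hq_prob
    hq_symm (fun x => p t x) hp_slice
  have hFr2 : (∫ x in Set.Icc (0:ℝ) mmax,
        x * (2 * ∫ z in Set.Icc (0:ℝ) mmax, (lam (S t) z / z) * q (x / z) * p t z))
      = ∫ x in Set.Icc (0:ℝ) mmax, lam (S t) x * (x * p t x) := by
    rw [hFr]
    exact integral_congr_ae (ae_of_all _ (fun z => by ring))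
  -- integrabilities
  have hint1 : IntegrableOn (fun x => x * pt t x) (Set.Icc (0:ℝ) mmax) :=
    (continuousOn_id.mul hpt_slice).integrableOn_Icc
  have hint2 : IntegrableOn (fun x => mu (S t) * (x * p t x)) (Set.Icc (0:ℝ) mmax) :=
    (continuousOn_const.mul (continuousOn_id.mul hp_slice)).integrableOn_Icc
  have hint3 : IntegrableOn (fun x => mu (S t) * (x ^ 2 * px t x)) (Set.Icc (0:ℝ) mmax) :=
    (continuousOn_const.mul ((continuousOn_id.pow 2).mul hpx_slice)).integrableOn_Icc
  have hint4 : IntegrableOn (fun x => lam (S t) x * (x * p t x)) (Set.Icc (0:ℝ) mmax) :=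
    (hlam1_cont.mul (continuousOn_id.mul hp_slice)).integrableOn_Icc
  have hint5 : IntegrableOn (fun x => D * (x * p t x)) (Set.Icc (0:ℝ) mmax) :=
    (continuousOn_const.mul (continuousOn_id.mul hp_slice)).integrableOn_Icc
  have hint23 : IntegrableOn
      (fun x => mu (S t) * (x * p t x) + mu (S t) * (x ^ 2 * px t x))
      (Set.Icc (0:ℝ) mmax) := hint2.add hint3
  have hint234 : IntegrableOn
      (fun x => mu (S t) * (x * p t x) + mu (S t) * (x ^ 2 * px t x)
        + lam (S t) x * (x * p t x)) (Set.Icc (0:ℝ) mmax) := hint23.add hint4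
  have hint2345 : IntegrableOn
      (fun x => mu (S t) * (x * p t x) + mu (S t) * (x ^ 2 * px t x)
        + lam (S t) x * (x * p t x) + D * (x * p t x)) (Set.Icc (0:ℝ) mmax) :=
    hint234.add hint5
  -- split the fragmentation integral using the PDE
  have hsum : (∫ x in Set.Icc (0:ℝ) mmax,
        x * (2 * ∫ z in Set.Icc (0:ℝ) mmax, (lam (S t) z / z) * q (x / z) * p t z))
      = (∫ x in Set.Icc (0:ℝ) mmax, x * pt t x)
        + (mu (S t) * (∫ x in Set.Icc (0:ℝ) mmax, x * p t x)
          + mu (S t) * (∫ x in Set.Icc (0:ℝ) mmax, x ^ 2 * px t x)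
          + (∫ x in Set.Icc (0:ℝ) mmax, lam (S t) x * (x * p t x))
          + D * (∫ x in Set.Icc (0:ℝ) mmax, x * p t x)) := by
    rw [← integral_const_mul (mu (S t)) (fun x => x * p t x),
      ← integral_const_mul (mu (S t)) (fun x => x ^ 2 * px t x),
      ← integral_const_mul D (fun x => x * p t x),
      ← integral_add hint2 hint3, ← integral_add hint23 hint4,
      ← integral_add hint234 hint5,
      ← integral_add hint1 hint2345]
    apply setIntegral_congr_fun measurableSet_Icc
    intro x hx
    have h := hpde t ht x hx
    show x * (2 * ∫ z in Set.Icc (0:ℝ) mmax, (lam (S t) z / z) * q (x / z) * p t z)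
      = x * pt t x + (mu (S t) * (x * p t x) + mu (S t) * (x ^ 2 * px t x)
        + lam (S t) x * (x * p t x) + D * (x * p t x))
    linear_combination (-x) * h
  -- the key integral identity
  have hCc : (∫ x in Set.Icc (0:ℝ) mmax, x * pt t x)
      = (mu (S t) - D) * ∫ x in Set.Icc (0:ℝ) mmax, x * p t x := by
    linear_combination hFr2 - hsum - mu (S t) * hB
  -- differentiate under the integral sign
  have H : HasDerivWithinAt (fun τ => ∫ x in Set.Icc (0:ℝ) mmax, x * p τ x)
      (∫ x in Set.Icc (0:ℝ) mmax, x * pt t x) (Set.Icc 0 T) t := by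
    exact hasDerivWithinAt_integral_param hmmax.le (fun τ x => x * p τ x)
      (fun τ x => x * pt τ x)
      (continuous_snd.continuousOn.mul hp_cont)
      (fun t' ht' x hx => (hpt t' ht' x hx).const_mul x)
      (continuous_snd.continuousOn.mul hpt_cont) ht
  rw [hCc] at H
  constructor
  · have H2 := H.const_mul (1 / V)
    have heq : (mu (S t) - D) * ((1 / V) * ∫ x in Set.Icc (0:ℝ) mmax, x * p t x)
        = (1 / V) * ((mu (S t) - D) * ∫ x in Set.Icc (0:ℝ) mmax, x * p t x) := by ring
    rw [heq]
    exact H2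
  · have hμ : (∫ x in Set.Icc (0:ℝ) mmax, mu (S t) * x * p t x)
        = mu (S t) * ∫ x in Set.Icc (0:ℝ) mmax, x * p t x := by
      rw [← integral_const_mul]
      exact integral_congr_ae (ae_of_all _ (fun x => by ring))
    have h2 := hS_ode t ht
    rw [hμ] at h2
    have heq : D * (sIn - S t)
          - k * mu (S t) * ((1 / V) * ∫ x in Set.Icc (0:ℝ) mmax, x * p t x)
        = D * (sIn - S t)
          - (k / V) * (mu (S t) * ∫ x in Set.Icc (0:ℝ) mmax, x * p t x) := by ring
    rw [heq]
    exact h2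
end
end
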